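/- arXiv:1603.01043 — 2 statements merged into one kernel-verified Lean document; each statement's English description precedes it below -/
import Mathlib

section
/- Let P = {U^1, U^2} be a 2-partition of V = (V_1,...,V_r), fix j_1≠j_2, and x,y distinct vertices in U^1_{j_1}. Let D_2 = φ(θ(D^{j_2}_{x→y})) be a copy of the labelled gadget graph θ(D^{j_2}_{x→y}), compatible with its labelling. Then D_2 is K_r-divisible and, for any j_3,j_4 with j_4≠j_2 and any vertex v ∈ U^1∖(V_{j_3}∪V_{j_4}): d_{D_2}(v,U^2_{j_3}) − d_{D_2}(v,U^2_{j_4}) equals −1 if v=x and j_3=j_2; equals +1 if v=y and j_3=j_2; and equals 0 otherwise. -/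
open Finset

/-- Vertex type for the gadget graph `θ(D^{j₂}_{x→y})`: base vertices `w^i_j`
(for `i ∈ {1,2,3}`, `j ∈ [r]`) together with, for each (potential) edge `e f` of
`D^{j₂}_{x→y}`, the inner vertices of its expansion gadget `D_{ef}`, indexed by a side
`c ∈ Fin 2` and a class `j ∈ Fin r`.  (Unused indices are isolated vertices.) -/
abbrev TV (r : ℕ) :=
  (Fin 3 × Fin r) ⊕ (((Fin 3 × Fin r) × (Fin 3 × Fin r)) × (Fin 2 × Fin r))

def enc {r : ℕ} (e : Fin 3 × Fin r) : ℕ := e.1.val * r + e.2.val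

/-- The edges of the labelled graph `D^{j₂}_{x→y}` on the base vertices `w^i_j`
(here `i = 0` codes `W¹`, `i = 1` codes `w²_{j₁}`, `i = 2` codes `W³`): all edges inside
`W¹ \ {w¹_{j₁}}`, all edges inside `W³ \ {w³_{j₁}}`, the edges `w¹_{j₁} w³_j` and
`w¹_j w²_{j₁}` for `j ≠ j₁, j₂`, and the edges `w¹_{j₁} w¹_{j₂}` and `w²_{j₁} w³_{j₂}`. -/
def DEdge {r : ℕ} (j₁ j₂ : Fin r) (e f : Fin 3 × Fin r) : Prop :=
  (e.1 = 0 ∧ f.1 = 0 ∧ ((e.2 ≠ j₁ ∧ f.2 ≠ j₁ ∧ e.2 ≠ f.2) ∨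
      (e.2 = j₁ ∧ f.2 = j₂) ∨ (e.2 = j₂ ∧ f.2 = j₁))) ∨
  (e.1 = 0 ∧ f.1 = 2 ∧ e.2 = j₁ ∧ f.2 ≠ j₁ ∧ f.2 ≠ j₂) ∨
  (e.1 = 2 ∧ f.1 = 0 ∧ f.2 = j₁ ∧ e.2 ≠ j₁ ∧ e.2 ≠ j₂) ∨
  (e.1 = 0 ∧ f.1 = 1 ∧ f.2 = j₁ ∧ e.2 ≠ j₁ ∧ e.2 ≠ j₂) ∨
  (e.1 = 1 ∧ f.1 = 0 ∧ e.2 = j₁ ∧ f.2 ≠ j₁ ∧ f.2 ≠ j₂) ∨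
  (e.1 = 1 ∧ f.1 = 2 ∧ e.2 = j₁ ∧ f.2 = j₂) ∨
  (e.1 = 2 ∧ f.1 = 1 ∧ f.2 = j₁ ∧ e.2 = j₂) ∨
  (e.1 = 2 ∧ f.1 = 2 ∧ e.2 ≠ j₁ ∧ f.2 ≠ j₁ ∧ e.2 ≠ f.2)

/-- `(e, f)` indexes an actual gadget (one per unordered edge of `D^{j₂}_{x→y}`). -/
def Active {r : ℕ} (j₁ j₂ : Fin r) (e f : Fin 3 × Fin r) : Prop :=
  DEdge j₁ j₂ e f ∧ enc e < enc f

/-- The adjacency generating relation of `θ(D^{j₂}_{x→y})`: for each edge `e f` of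
`D^{j₂}_{x→y}` take a copy `D_{ef}` of `D₀[W^{i₁}, W^{i₂}]` minus that edge (a `K_r` minus an
edge if `e, f` lie in the same `W^i`, a `K_{r,r}` minus a perfect matching minus the edge
otherwise), join `e` to the copy of `f` in `D_{ef}` and `f` to the copy of `e`. -/
def thetaRel {r : ℕ} (j₁ j₂ : Fin r) : TV r → TV r → Prop
  | Sum.inl v, Sum.inr ⟨⟨e, f⟩, ⟨c, j⟩⟩ =>
      Active j₁ j₂ e f ∧
      ((e.1 = f.1 ∧ c = 0 ∧ ((v = e ∧ j = f.2) ∨ (v = f ∧ j = e.2))) ∨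
       (e.1 ≠ f.1 ∧ ((v = e ∧ c = 1 ∧ j = f.2) ∨ (v = f ∧ c = 0 ∧ j = e.2))))
  | Sum.inr ⟨⟨e, f⟩, ⟨c, j⟩⟩, Sum.inr ⟨⟨e', f'⟩, ⟨c', j'⟩⟩ =>
      e = e' ∧ f = f' ∧ Active j₁ j₂ e f ∧
      ((e.1 = f.1 ∧ c = 0 ∧ c' = 0 ∧ j ≠ j' ∧
          ¬((j = e.2 ∧ j' = f.2) ∨ (j = f.2 ∧ j' = e.2))) ∨
       (e.1 ≠ f.1 ∧ c = 0 ∧ c' = 1 ∧ j ≠ j' ∧ ¬(j = e.2 ∧ j' = f.2)))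
  | _, _ => False

/-- The gadget graph `θ(D^{j₂}_{x→y})` (up to isolated vertices). -/
def thetaGraph {r : ℕ} (j₁ j₂ : Fin r) : SimpleGraph (TV r) :=
  SimpleGraph.fromRel (thetaRel j₁ j₂)

section Aux

variable {r : ℕ}

instance decDEdge (j₁ j₂ : Fin r) (e f : Fin 3 × Fin r) : Decidable (DEdge j₁ j₂ e f) := by
  unfold DEdge; infer_instance

instance decActive (j₁ j₂ : Fin r) (e f : Fin 3 × Fin r) : Decidable (Active j₁ j₂ e f) := by
  unfold Active; infer_instance

/-- class of a vertex -/
def cls : TV r → Fin r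
  | Sum.inl (_, j) => j
  | Sum.inr (_, (_, j)) => j

/-- part (side) of a vertex -/
def pt : TV r → Fin 3
  | Sum.inl (i, _) => i
  | Sum.inr ((e, f), (c, _)) => if c = 0 then e.1 else f.1

/-- the inner neighbour of base vertex `w` inside the gadget of the edge `{w, u}` -/
def gadNbr (w u : Fin 3 × Fin r) : TV r :=
  if enc w < enc u then Sum.inr ((w, u), (if w.1 = u.1 then 0 else 1, u.2))
  else Sum.inr ((u, w), (0, u.2))

/-- the `DEdge`-neighbour of a base vertex `w` in class `j` -/
def dnbr (j₁ j₂ : Fin r) (w : Fin 3 × Fin r) (j : Fin r) : Option (Fin 3 × Fin r) :=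
  if w.2 = j then none else
  if w.1 = 0 then
    (if w.2 = j₁ then (if j = j₂ then some (0, j₂) else some (2, j))
     else if j = j₁ then (if w.2 = j₂ then some (0, j₁) else some (1, j₁)) else some (0, j))
  else if w.1 = 1 then
    (if w.2 = j₁ then (if j = j₂ then some (2, j₂) else some (0, j)) else none)
  else
    (if w.2 = j₁ then none
     else if j = j₁ then (if w.2 = j₂ then some (1, j₁) else some (0, j₁)) else some (2, j))

/-- the neighbour of `w` in class `j` in the gadget graph -/
def N (j₁ j₂ : Fin r) : TV r → Fin r → Option (TV r)
  | Sum.inl w, j => (dnbr j₁ j₂ w j).map (gadNbr w)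
  | Sum.inr ((e, f), (c, j')), j =>
    if Active j₁ j₂ e f then
      if j = j' then none else
      if e.1 = f.1 then
        if c = 0 then
          if j' = e.2 ∧ j = f.2 then some (Sum.inl f)
          else if j' = f.2 ∧ j = e.2 then some (Sum.inl e)
          else some (Sum.inr ((e, f), (0, j)))
        else none
      else
        if c = 0 then
          if j' = e.2 ∧ j = f.2 then some (Sum.inl f)
          else some (Sum.inr ((e, f), (1, j)))
        else
          if j' = f.2 ∧ j = e.2 then some (Sum.inl e)
          else some (Sum.inr ((e, f), (0, j)))
    else none

lemma enc_inj {a b : Fin 3 × Fin r} (h : enc a = enc b) : a = b := by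
  obtain ⟨⟨a1, ha1⟩, ⟨a2, ha2⟩⟩ := a
  obtain ⟨⟨b1, hb1⟩, ⟨b2, hb2⟩⟩ := b
  simp only [enc] at h
  simp only [Prod.mk.injEq, Fin.mk.injEq]
  interval_cases a1 <;> interval_cases b1 <;> omega

lemma dedge_symm {j₁ j₂ : Fin r} {e f : Fin 3 × Fin r} (h : DEdge j₁ j₂ e f) :
    DEdge j₁ j₂ f e := by
  unfold DEdge at h ⊢
  rcases h with ⟨h1,h2,⟨a1,a2,a3⟩|⟨a1,a2⟩|⟨a1,a2⟩⟩|⟨h1,h2,h3,h4,h5⟩|⟨h1,h2,h3,h4,h5⟩|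
    ⟨h1,h2,h3,h4,h5⟩|⟨h1,h2,h3,h4,h5⟩|⟨h1,h2,h3,h4⟩|⟨h1,h2,h3,h4⟩|⟨h1,h2,h3,h4,h5⟩
  · exact Or.inl ⟨h2, h1, Or.inl ⟨a2, a1, Ne.symm a3⟩⟩
  · exact Or.inl ⟨h2, h1, Or.inr (Or.inr ⟨a2, a1⟩)⟩
  · exact Or.inl ⟨h2, h1, Or.inr (Or.inl ⟨a2, a1⟩)⟩
  · exact Or.inr (Or.inr (Or.inl ⟨h2, h1, h3, h4, h5⟩))
  · exact Or.inr (Or.inl ⟨h2, h1, h3, h4, h5⟩)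
  · exact Or.inr (Or.inr (Or.inr (Or.inr (Or.inl ⟨h2, h1, h3, h4, h5⟩))))
  · exact Or.inr (Or.inr (Or.inr (Or.inl ⟨h2, h1, h3, h4, h5⟩)))
  · exact Or.inr (Or.inr (Or.inr (Or.inr (Or.inr (Or.inr (Or.inl ⟨h2, h1, h3, h4⟩))))))
  · exact Or.inr (Or.inr (Or.inr (Or.inr (Or.inr (Or.inl ⟨h2, h1, h3, h4⟩)))))
  · exact Or.inr (Or.inr (Or.inr (Or.inr (Or.inr (Or.inr (Or.inr ⟨h2, h1, h4, h3, Ne.symm h5⟩))))))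

lemma dedge_ne2 {j₁ j₂ : Fin r} (hj : j₁ ≠ j₂) {e f : Fin 3 × Fin r}
    (h : DEdge j₁ j₂ e f) : e.2 ≠ f.2 := by
  unfold DEdge at h
  intro hc
  rcases h with ⟨h1,h2,⟨a1,a2,a3⟩|⟨a1,a2⟩|⟨a1,a2⟩⟩|⟨h1,h2,h3,h4,h5⟩|⟨h1,h2,h3,h4,h5⟩|
    ⟨h1,h2,h3,h4,h5⟩|⟨h1,h2,h3,h4,h5⟩|⟨h1,h2,h3,h4⟩|⟨h1,h2,h3,h4⟩|⟨h1,h2,h3,h4,h5⟩ <;>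
    simp_all [Ne.symm hj]

lemma dedge_valid {j₁ j₂ : Fin r} (hj : j₁ ≠ j₂) {e f : Fin 3 × Fin r}
    (h : DEdge j₁ j₂ e f) :
    ((f.1 = 1 → f.2 = j₁) ∧ (f.1 = 2 → f.2 ≠ j₁)) ∧
    ((e.1 = 1 → e.2 = j₁) ∧ (e.1 = 2 → e.2 ≠ j₁)) := by
  unfold DEdge at h
  rcases h with ⟨h1,h2,⟨a1,a2,a3⟩|⟨a1,a2⟩|⟨a1,a2⟩⟩|⟨h1,h2,h3,h4,h5⟩|⟨h1,h2,h3,h4,h5⟩|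
    ⟨h1,h2,h3,h4,h5⟩|⟨h1,h2,h3,h4,h5⟩|⟨h1,h2,h3,h4⟩|⟨h1,h2,h3,h4⟩|⟨h1,h2,h3,h4,h5⟩ <;>
    refine ⟨⟨fun hh => ?_, fun hh => ?_⟩, fun hh => ?_, fun hh => ?_⟩ <;>
    simp_all [Ne.symm hj]

lemma dnbr_spec {j₁ j₂ : Fin r} (hj : j₁ ≠ j₂) {w d : Fin 3 × Fin r} {j : Fin r}
    (h : dnbr j₁ j₂ w j = some d) : d.2 = j ∧ d ≠ w ∧ DEdge j₁ j₂ w d := by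
  obtain ⟨w1, w2⟩ := w
  rcases (by decide : ∀ a : Fin 3, a = 0 ∨ a = 1 ∨ a = 2) w1 with rfl | rfl | rfl <;>
  · unfold dnbr at h
    unfold DEdge
    split_ifs at h <;>
      first
      | exact Option.noConfusion h
      | (injection h with h; subst h;
         refine ⟨by simp_all [eq_comm], by simp_all [Prod.ext_iff, eq_comm],
           by simp_all [eq_comm]⟩)

lemma dedge_dnbr {j₁ j₂ : Fin r} (hj : j₁ ≠ j₂) {e f : Fin 3 × Fin r}
    (h : DEdge j₁ j₂ e f) : dnbr j₁ j₂ e f.2 = some f := by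
  obtain ⟨e1, e2⟩ := e; obtain ⟨f1, f2⟩ := f
  unfold DEdge at h
  simp only at h
  rcases h with ⟨rfl,rfl,⟨a1,a2,a3⟩|⟨rfl,rfl⟩|⟨rfl,rfl⟩⟩|⟨rfl,rfl,rfl,h4,h5⟩|⟨rfl,rfl,rfl,h4,h5⟩|
    ⟨rfl,rfl,rfl,h4,h5⟩|⟨rfl,rfl,rfl,h4,h5⟩|⟨rfl,rfl,rfl,rfl⟩|⟨rfl,rfl,rfl,rfl⟩|⟨rfl,rfl,h3,h4,h5⟩ <;>
    simp_all [dnbr, eq_comm]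

lemma pt_gadNbr {w d : Fin 3 × Fin r} : pt (gadNbr w d) = d.1 := by
  unfold gadNbr
  split_ifs with h1 h2 <;> simp_all [pt]

lemma cls_gadNbr {w d : Fin 3 × Fin r} : cls (gadNbr w d) = d.2 := by
  unfold gadNbr
  split_ifs <;> rfl

set_option maxHeartbeats 2000000 in
lemma adj_imp {j₁ j₂ : Fin r} (hj : j₁ ≠ j₂) {w u : TV r}
    (h : (thetaGraph j₁ j₂).Adj w u) : ∃ j, N j₁ j₂ w j = some u := by
  rw [thetaGraph, SimpleGraph.fromRel_adj] at h
  obtain ⟨hne, h⟩ := h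
  rcases w with p | ⟨⟨e, f⟩, c, jc⟩ <;> rcases u with q | ⟨⟨e', f'⟩, c', jc'⟩
  · rcases h with h | h <;> exact (h : False).elim
  · replace h : thetaRel j₁ j₂ (Sum.inl p) (Sum.inr ((e', f'), (c', jc'))) := by
      rcases h with h | h
      · exact h
      · exact (h : False).elim
    obtain ⟨hA, hcase⟩ := h
    have hne2 := dedge_ne2 hj hA.1
    have hle := hA.2
    rcases hcase with ⟨hs, hc0, ⟨rfl, rfl⟩ | ⟨rfl, rfl⟩⟩ | ⟨hs, ⟨rfl, hc1, rfl⟩ | ⟨rfl, hc0, rfl⟩⟩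
    · refine ⟨f'.2, ?_⟩
      simp only [N]
      rw [dedge_dnbr hj hA.1]
      simp [gadNbr, hle, hs, hc0]
    · refine ⟨e'.2, ?_⟩
      simp only [N]
      rw [dedge_dnbr hj (dedge_symm hA.1)]
      simp [gadNbr, Nat.not_lt.mpr (le_of_lt hle), hc0]
    · refine ⟨f'.2, ?_⟩
      simp only [N]
      rw [dedge_dnbr hj hA.1]
      simp [gadNbr, hle, hs, hc1]
    · refine ⟨e'.2, ?_⟩
      simp only [N]
      rw [dedge_dnbr hj (dedge_symm hA.1)]
      simp [gadNbr, Nat.not_lt.mpr (le_of_lt hle), hc0]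
  · replace h : thetaRel j₁ j₂ (Sum.inl q) (Sum.inr ((e, f), (c, jc))) := by
      rcases h with h | h
      · exact (h : False).elim
      · exact h
    obtain ⟨hA, hcase⟩ := h
    have hne2 := dedge_ne2 hj hA.1
    rcases hcase with ⟨hs, hc0, ⟨rfl, rfl⟩ | ⟨rfl, rfl⟩⟩ | ⟨hs, ⟨rfl, hc1, rfl⟩ | ⟨rfl, hc0, rfl⟩⟩ <;>
    · refine ⟨q.2, ?_⟩
      simp only [N]
      split_ifs <;> first | rfl | (exfalso; tauto) | simp_all
  · rcases h with h | h <;>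
    · obtain ⟨he, hf, hA, hcase⟩ := h
      cases he; cases hf
      have hne2 := dedge_ne2 hj hA.1
      rcases hcase with ⟨hs, hca, hcb, hnej, hnp⟩ | ⟨hs, hca, hcb, hnej, hnp⟩ <;>
      · subst hca; subst hcb
        refine ⟨jc', ?_⟩
        simp only [N]
        split_ifs <;> first | rfl | (exfalso; tauto) | simp_all

set_option maxHeartbeats 2000000 in
lemma imp_adj {j₁ j₂ : Fin r} (hj : j₁ ≠ j₂) {w u : TV r} {j : Fin r}
    (h : N j₁ j₂ w j = some u) : (thetaGraph j₁ j₂).Adj w u := by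
  rcases w with p | ⟨⟨e, f⟩, c, jc⟩
  · simp only [N, Option.map_eq_some_iff] at h
    obtain ⟨d, hd, rfl⟩ := h
    obtain ⟨hd2, hdne, hDE⟩ := dnbr_spec hj hd
    have henc : enc p ≠ enc d := fun hc => hdne (enc_inj hc).symm
    rw [thetaGraph, SimpleGraph.fromRel_adj]
    constructor
    · unfold gadNbr; split_ifs <;> simp
    · left
      unfold gadNbr
      rcases Nat.lt_or_ge (enc p) (enc d) with hlt | hge
      · rw [if_pos hlt]
        show thetaRel j₁ j₂ (Sum.inl p) (Sum.inr ((p, d), (if p.1 = d.1 then 0 else 1, d.2)))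
        refine ⟨⟨hDE, hlt⟩, ?_⟩
        by_cases hsame : p.1 = d.1
        · exact Or.inl ⟨hsame, by rw [if_pos hsame], Or.inl ⟨rfl, rfl⟩⟩
        · exact Or.inr ⟨hsame, Or.inl ⟨rfl, by rw [if_neg hsame], rfl⟩⟩
      · have hlt : enc d < enc p := lt_of_le_of_ne hge (Ne.symm henc)
        rw [if_neg (by omega)]
        show thetaRel j₁ j₂ (Sum.inl p) (Sum.inr ((d, p), (0, d.2)))
        refine ⟨⟨dedge_symm hDE, hlt⟩, ?_⟩
        by_cases hsame : d.1 = p.1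
        · exact Or.inl ⟨hsame, rfl, Or.inr ⟨rfl, rfl⟩⟩
        · exact Or.inr ⟨hsame, Or.inr ⟨rfl, rfl, rfl⟩⟩
  · rcases (by decide : ∀ a : Fin 2, a = 0 ∨ a = 1) c with rfl | rfl <;>
    · simp only [N] at h
      rw [thetaGraph, SimpleGraph.fromRel_adj]
      split_ifs at h <;>
        first
        | exact Option.noConfusion h
        | (injection h with h; subst h
           refine ⟨by simp_all [eq_comm], ?_⟩
           simp only [thetaRel]
           simp_all [eq_comm]
           try tauto)

set_option maxHeartbeats 1000000 in
lemma N_cls {j₁ j₂ : Fin r} (hj : j₁ ≠ j₂) {w u : TV r} {j : Fin r}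
    (h : N j₁ j₂ w j = some u) : cls u = j := by
  rcases w with p | ⟨⟨e, f⟩, c, j'⟩
  · simp only [N, Option.map_eq_some_iff] at h
    obtain ⟨d, hd, rfl⟩ := h
    rw [cls_gadNbr, (dnbr_spec hj hd).1]
  · simp only [N] at h
    split_ifs at h <;>
      first
      | exact Option.noConfusion h
      | (injection h with h; subst h; simp_all [cls, eq_comm])

set_option maxHeartbeats 1000000 in
lemma N_total {j₁ j₂ : Fin r} (hj : j₁ ≠ j₂) {w u' : TV r} {j j' : Fin r}
    (h : N j₁ j₂ w j' = some u') (hne : j ≠ cls w) : ∃ u, N j₁ j₂ w j = some u := by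
  rcases w with p | ⟨⟨e, f⟩, c, j''⟩
  · obtain ⟨p1, p2⟩ := p
    simp only [cls] at hne
    rcases (by decide : ∀ a : Fin 3, a = 0 ∨ a = 1 ∨ a = 2) p1 with rfl | rfl | rfl <;>
    · simp only [N] at h ⊢
      unfold dnbr at h ⊢
      split_ifs at h ⊢ <;> simp_all [eq_comm]
  · simp only [cls] at hne
    simp only [N] at h ⊢
    split_ifs at h ⊢ <;> simp_all [eq_comm]

lemma pt_inl (p : Fin 3 × Fin r) : pt (Sum.inl p) = p.1 := rfl

lemma pt_inr0 (e f : Fin 3 × Fin r) (jj : Fin r) :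
    pt (Sum.inr ((e, f), ((0 : Fin 2), jj))) = e.1 := rfl

lemma pt_inr1 (e f : Fin 3 × Fin r) (jj : Fin r) :
    pt (Sum.inr ((e, f), ((1 : Fin 2), jj))) = f.1 := rfl

lemma fin3cases : ∀ a : Fin 3, a = 0 ∨ a = 1 ∨ a = 2 := by decide

set_option maxHeartbeats 1000000 in
lemma N_pt_x {j₁ j₂ : Fin r} (hj : j₁ ≠ j₂) {j : Fin r} {u : TV r}
    (h : N j₁ j₂ (Sum.inl (0, j₁)) j = some u) : (pt u = 2 ↔ j ≠ j₂) := by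
  simp only [N, Option.map_eq_some_iff] at h
  obtain ⟨d, hd, rfl⟩ := h
  rw [pt_gadNbr]
  unfold dnbr at hd
  split_ifs at hd <;>
    first
    | exact Option.noConfusion hd
    | (injection hd with hd; subst hd; simp_all)

set_option maxHeartbeats 1000000 in
lemma N_pt_y {j₁ j₂ : Fin r} (hj : j₁ ≠ j₂) {j : Fin r} {u : TV r}
    (h : N j₁ j₂ (Sum.inl (1, j₁)) j = some u) : (pt u = 2 ↔ j = j₂) := by
  simp only [N, Option.map_eq_some_iff] at h
  obtain ⟨d, hd, rfl⟩ := h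
  rw [pt_gadNbr]
  unfold dnbr at hd
  split_ifs at hd <;>
    first
    | exact Option.noConfusion hd
    | (injection hd with hd; subst hd; simp_all)

set_option maxHeartbeats 2000000 in
lemma N_pt_gen {j₁ j₂ : Fin r} {w u u' : TV r} {j j' : Fin r}
    (hw2 : pt w ≠ 2) (hwx : w ≠ Sum.inl (0, j₁)) (hwy : w ≠ Sum.inl (1, j₁))
    (h : N j₁ j₂ w j = some u) (h' : N j₁ j₂ w j' = some u') :
    (pt u = 2 ↔ pt u' = 2) := by
  rcases w with ⟨p1, p2⟩ | ⟨⟨e, f⟩, c, jc⟩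
  · simp only [N, Option.map_eq_some_iff] at h h'
    obtain ⟨d, hd, rfl⟩ := h
    obtain ⟨d', hd', rfl⟩ := h'
    rw [pt_gadNbr, pt_gadNbr]
    rcases fin3cases p1 with rfl | rfl | rfl
    · have hp2 : ¬p2 = j₁ := fun hc => hwx (by rw [hc])
      unfold dnbr at hd hd'
      split_ifs at hd hd' <;>
        first
        | exact Option.noConfusion hd
        | exact Option.noConfusion hd'
        | (injection hd with hd; injection hd' with hd'; subst hd; subst hd'; simp_all)
    · have hp2 : ¬p2 = j₁ := fun hc => hwy (by rw [hc])
      unfold dnbr at hd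
      split_ifs at hd <;> first | exact Option.noConfusion hd | simp_all
    · exact absurd rfl hw2
  · simp only [N] at h h'
    split_ifs at h h' <;>
      first
      | exact Option.noConfusion h
      | exact Option.noConfusion h'
      | (injection h with h; injection h' with h'; subst h; subst h'; simp_all [pt])

end Aux

set_option maxHeartbeats 4000000 in
/-- Let `P = {U¹, U²}` be a 2-partition of `V = (V 1, ..., V r)`, `j₁ ≠ j₂` and let
`x ≠ y ∈ U¹ ∩ V j₁`.  If `D₂ = ψ(θ(D^{j₂}_{x→y}))` is a copy of the gadget graph compatible
with its labelling, then `D₂` is `K_r`-divisible, and for all `j₃, j₄` with `j₄ ≠ j₂` and all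
`v ∈ U¹ \ (V j₃ ∪ V j₄)` the difference `d_{D₂}(v, U² ∩ V j₃) - d_{D₂}(v, U² ∩ V j₄)` equals
`-1` if `v = x ∧ j₃ = j₂`, `+1` if `v = y ∧ j₃ = j₂`, and `0` otherwise. -/
theorem stmt17 {γ : Type*} [DecidableEq γ] {r : ℕ} (hr : 3 ≤ r)
    (V : Fin r → Finset γ) (U1 U2 : Finset γ)
    (hVdisj : ∀ j₁ j₂ : Fin r, j₁ ≠ j₂ → Disjoint (V j₁) (V j₂))
    (hU : Disjoint U1 U2) (hUcov : ∀ z : γ, z ∈ U1 ∨ z ∈ U2)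
    (j₁ j₂ : Fin r) (hj : j₁ ≠ j₂)
    (x y : γ) (hx : x ∈ U1 ∩ V j₁) (hy : y ∈ U1 ∩ V j₁) (hxy : x ≠ y)
    (ψ : TV r ↪ γ)
    (hψx : ψ (Sum.inl (0, j₁)) = x) (hψy : ψ (Sum.inl (1, j₁)) = y)
    (hψ1 : ∀ j : Fin r, j ≠ j₁ → ψ (Sum.inl (0, j)) ∈ U1 ∩ V j)
    (hψ3 : ∀ j : Fin r, j ≠ j₁ → ψ (Sum.inl (2, j)) ∈ U2 ∩ V j)
    (hψin : ∀ e f : Fin 3 × Fin r, Active j₁ j₂ e f → ∀ j : Fin r,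
      (ψ (Sum.inr ⟨⟨e, f⟩, ⟨0, j⟩⟩) ∈ (if e.1 = 2 then U2 else U1) ∩ V j) ∧
      (e.1 ≠ f.1 → ψ (Sum.inr ⟨⟨e, f⟩, ⟨1, j⟩⟩) ∈ (if f.1 = 2 then U2 else U1) ∩ V j))
    (D₂ : SimpleGraph γ) (hD₂ : D₂ = (thetaGraph j₁ j₂).map ψ) :
    (∀ j j' : Fin r, ∀ v : γ, v ∉ V j → v ∉ V j' →
      ((V j : Set γ) ∩ D₂.neighborSet v).ncard =
        ((V j' : Set γ) ∩ D₂.neighborSet v).ncard) ∧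
    (∀ j₃ j₄ : Fin r, j₄ ≠ j₂ → ∀ v ∈ U1, v ∉ V j₃ → v ∉ V j₄ →
      ((((U2 ∩ V j₃ : Finset γ) : Set γ) ∩ D₂.neighborSet v).ncard : ℤ) -
        ((((U2 ∩ V j₄ : Finset γ) : Set γ) ∩ D₂.neighborSet v).ncard : ℤ) =
      if v = x ∧ j₃ = j₂ then -1 else if v = y ∧ j₃ = j₂ then 1 else 0) := by
  subst hD₂
  -- location of base vertices
  have hBloc : ∀ p : Fin 3 × Fin r, (p.1 = 1 → p.2 = j₁) → (p.1 = 2 → p.2 ≠ j₁) →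
      ψ (Sum.inl p) ∈ (if p.1 = 2 then U2 else U1) ∩ V p.2 := by
    rintro ⟨p1, p2⟩ h1 h2
    rcases fin3cases p1 with rfl | rfl | rfl
    · by_cases hp : p2 = j₁
      · subst hp; simpa [hψx] using hx
      · simpa using hψ1 p2 hp
    · have := h1 rfl; subst this
      simpa [hψy] using hy
    · simpa using hψ3 p2 (h2 rfl)
  -- location of all N-outputs
  have hloc : ∀ (w : TV r) (j : Fin r) (u : TV r), N j₁ j₂ w j = some u →
      cls u = j ∧ ψ u ∈ (if pt u = 2 then U2 else U1) ∩ V j := by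
    intro w j u hN
    refine ⟨N_cls hj hN, ?_⟩
    rcases w with p | ⟨⟨e, f⟩, c, jc⟩
    · simp only [N, Option.map_eq_some_iff] at hN
      obtain ⟨d, hd, rfl⟩ := hN
      obtain ⟨hd2, hdne, hDE⟩ := dnbr_spec hj hd
      rw [pt_gadNbr]
      subst hd2
      have hne : enc p ≠ enc d := fun hc => hdne (enc_inj hc).symm
      unfold gadNbr
      by_cases hlt : enc p < enc d
      · rw [if_pos hlt]
        by_cases hs : p.1 = d.1
        · rw [if_pos hs]
          have := (hψin p d ⟨hDE, hlt⟩ d.2).1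
          rwa [hs] at this
        · rw [if_neg hs]
          exact (hψin p d ⟨hDE, hlt⟩ d.2).2 hs
      · rw [if_neg hlt]
        have hlt' : enc d < enc p := by omega
        exact (hψin d p ⟨dedge_symm hDE, hlt'⟩ d.2).1
    · simp only [N] at hN
      split_ifs at hN
      all_goals try exact Option.noConfusion hN
      all_goals injection hN with hN
      all_goals subst hN
      all_goals have hA' : Active j₁ j₂ e f := by assumption
      all_goals have hDE := hA'.1
      all_goals first
        | (have hb := hBloc f (dedge_valid hj hDE).1.1 (dedge_valid hj hDE).1.2
           split_ifs at hb ⊢ <;> simp_all [pt_inl]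
           done)
        | (have hb := hBloc e (dedge_valid hj hDE).2.1 (dedge_valid hj hDE).2.2
           split_ifs at hb ⊢ <;> simp_all [pt_inl]
           done)
        | (have hb := (hψin e f hA' j).1
           split_ifs at hb ⊢ <;> simp_all [pt_inr0]
           done)
        | (have hb := (hψin e f hA' j).2 (by assumption)
           split_ifs at hb ⊢ <;> simp_all [pt_inr1]
           done)
  -- neighbourhoods
  have hrange : ∀ v : γ, v ∉ Set.range ψ →
      ((thetaGraph j₁ j₂).map ψ).neighborSet v = ∅ := by
    intro v hv
    ext z
    simp only [SimpleGraph.mem_neighborSet, SimpleGraph.map_adj, Set.mem_empty_iff_false,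
      iff_false]
    rintro ⟨a, b, hab, ha, hb⟩
    exact hv ⟨a, ha⟩
  have hnb : ∀ w : TV r, ((thetaGraph j₁ j₂).map ψ).neighborSet (ψ w) =
      ψ '' {u | (thetaGraph j₁ j₂).Adj w u} := by
    intro w
    ext z
    simp only [SimpleGraph.mem_neighborSet, SimpleGraph.map_adj, Set.mem_image,
      Set.mem_setOf_eq]
    constructor
    · rintro ⟨a, b, hab, ha, rfl⟩
      obtain rfl := ψ.injective ha
      exact ⟨b, hab, rfl⟩
    · rintro ⟨b, hb, rfl⟩
      exact ⟨w, b, hb, rfl, rfl⟩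
  have hsetV : ∀ (w : TV r) (j : Fin r),
      (V j : Set γ) ∩ ((thetaGraph j₁ j₂).map ψ).neighborSet (ψ w) =
        ψ '' {u | N j₁ j₂ w j = some u} := by
    intro w j
    rw [hnb w]
    ext z
    simp only [Set.mem_inter_iff, Set.mem_image, Set.mem_setOf_eq, Finset.mem_coe]
    constructor
    · rintro ⟨hzV, b, hb, rfl⟩
      obtain ⟨j', hj'⟩ := adj_imp hj hb
      obtain ⟨hcls, hmem⟩ := hloc w j' b hj'
      have hbV : ψ b ∈ V j' := (Finset.mem_inter.mp hmem).2
      have heq : j = j' := by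
        by_contra hne
        exact Finset.disjoint_left.mp (hVdisj j j' hne) hzV hbV
      subst heq
      exact ⟨b, hj', rfl⟩
    · rintro ⟨b, hb, rfl⟩
      obtain ⟨hcls, hmem⟩ := hloc w j b hb
      exact ⟨(Finset.mem_inter.mp hmem).2, b, imp_adj hj hb, rfl⟩
  have hsetU2 : ∀ (w : TV r) (j : Fin r),
      ((U2 ∩ V j : Finset γ) : Set γ) ∩ ((thetaGraph j₁ j₂).map ψ).neighborSet (ψ w) =
        ψ '' {u | N j₁ j₂ w j = some u ∧ pt u = 2} := by
    intro w j
    rw [hnb w]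
    ext z
    simp only [Set.mem_inter_iff, Set.mem_image, Set.mem_setOf_eq, Finset.mem_coe,
      Finset.mem_inter]
    constructor
    · rintro ⟨⟨hzU, hzV⟩, b, hb, rfl⟩
      obtain ⟨j', hj'⟩ := adj_imp hj hb
      obtain ⟨hcls, hmem⟩ := hloc w j' b hj'
      rw [Finset.mem_inter] at hmem
      have heq : j = j' := by
        by_contra hne
        exact Finset.disjoint_left.mp (hVdisj j j' hne) hzV hmem.2
      subst heq
      refine ⟨b, ⟨hj', ?_⟩, rfl⟩
      by_contra hpt
      rw [if_neg hpt] at hmem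
      exact Finset.disjoint_left.mp hU hmem.1 hzU
    · rintro ⟨b, ⟨hb, hpt⟩, rfl⟩
      obtain ⟨hcls, hmem⟩ := hloc w j b hb
      rw [if_pos hpt] at hmem
      rw [Finset.mem_inter] at hmem
      exact ⟨⟨hmem.1, hmem.2⟩, b, imp_adj hj hb, rfl⟩
  -- cardinalities
  have hcV : ∀ (w : TV r) (j : Fin r) (u : TV r), N j₁ j₂ w j = some u →
      ((V j : Set γ) ∩ ((thetaGraph j₁ j₂).map ψ).neighborSet (ψ w)).ncard = 1 := by
    intro w j u hu
    rw [hsetV w j]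
    have hset : {u' : TV r | N j₁ j₂ w j = some u'} = {u} := by
      ext u'
      simp [hu, eq_comm]
    rw [hset, Set.image_singleton, Set.ncard_singleton]
  have hcV0 : ∀ (w : TV r) (j : Fin r), N j₁ j₂ w j = none →
      ((V j : Set γ) ∩ ((thetaGraph j₁ j₂).map ψ).neighborSet (ψ w)).ncard = 0 := by
    intro w j hu
    rw [hsetV w j]
    have hset : {u' : TV r | N j₁ j₂ w j = some u'} = ∅ := by
      ext u'
      simp [hu]
    rw [hset]
    simp
  have hcU2 : ∀ (w : TV r) (j : Fin r) (u : TV r), N j₁ j₂ w j = some u →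
      (((U2 ∩ V j : Finset γ) : Set γ) ∩
        ((thetaGraph j₁ j₂).map ψ).neighborSet (ψ w)).ncard =
        if pt u = 2 then 1 else 0 := by
    intro w j u hu
    rw [hsetU2 w j]
    by_cases hpt : pt u = 2
    · rw [if_pos hpt]
      have hset : {u' : TV r | N j₁ j₂ w j = some u' ∧ pt u' = 2} = {u} := by
        ext u'
        simp only [Set.mem_setOf_eq, hu, Option.some.injEq, Set.mem_singleton_iff]
        exact ⟨fun h => h.1.symm, fun h => ⟨h.symm, h ▸ hpt⟩⟩
      rw [hset, Set.image_singleton, Set.ncard_singleton]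
    · rw [if_neg hpt]
      have hset : {u' : TV r | N j₁ j₂ w j = some u' ∧ pt u' = 2} = ∅ := by
        ext u'
        simp only [Set.mem_setOf_eq, hu, Option.some.injEq, Set.mem_empty_iff_false,
          iff_false, not_and]
        exact fun h hc => hpt (h ▸ hc)
      rw [hset]
      simp
  have hcU20 : ∀ (w : TV r) (j : Fin r), N j₁ j₂ w j = none →
      (((U2 ∩ V j : Finset γ) : Set γ) ∩
        ((thetaGraph j₁ j₂).map ψ).neighborSet (ψ w)).ncard = 0 := by
    intro w j hu
    rw [hsetU2 w j]
    have hset : {u' : TV r | N j₁ j₂ w j = some u' ∧ pt u' = 2} = ∅ := by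
      ext u'
      simp [hu]
    rw [hset]
    simp
  constructor
  · -- K_r-divisibility
    intro j j' v hvj hvj'
    by_cases hv : v ∈ Set.range ψ
    · obtain ⟨w, rfl⟩ := hv
      cases hN3 : N j₁ j₂ w j with
      | none =>
        cases hN4 : N j₁ j₂ w j' with
        | none => rw [hcV0 w j hN3, hcV0 w j' hN4]
        | some u4 =>
          exfalso
          obtain ⟨jw, hNw⟩ := adj_imp hj ((imp_adj hj hN4).symm)
          obtain ⟨hclsw, hmemw⟩ := hloc u4 jw w hNw
          have hwV : ψ w ∈ V jw := (Finset.mem_inter.mp hmemw).2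
          have hjne : j ≠ cls w := by
            rw [hclsw]
            rintro rfl
            exact hvj hwV
          obtain ⟨u, hu⟩ := N_total hj hN4 hjne
          rw [hN3] at hu
          cases hu
      | some u3 =>
        obtain ⟨jw, hNw⟩ := adj_imp hj ((imp_adj hj hN3).symm)
        obtain ⟨hclsw, hmemw⟩ := hloc u3 jw w hNw
        have hwV : ψ w ∈ V jw := (Finset.mem_inter.mp hmemw).2
        have hjne : j' ≠ cls w := by
          rw [hclsw]
          rintro rfl
          exact hvj' hwV
        obtain ⟨u4, hN4⟩ := N_total hj hN3 hjne
        rw [hcV w j u3 hN3, hcV w j' u4 hN4]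
    · rw [hrange v hv]
      simp
  · -- degree difference
    intro j₃ j₄ hj42 v hvU1 hv3 hv4
    by_cases hv : v ∈ Set.range ψ
    · obtain ⟨w, rfl⟩ := hv
      by_cases hwx : w = Sum.inl (0, j₁)
      · subst hwx
        have h3ne : j₃ ≠ j₁ := by
          rintro rfl
          exact hv3 (by rw [hψx]; exact (Finset.mem_inter.mp hx).2)
        have h4ne : j₄ ≠ j₁ := by
          rintro rfl
          exact hv4 (by rw [hψx]; exact (Finset.mem_inter.mp hx).2)
        have hw2 : N j₁ j₂ (Sum.inl ((0 : Fin 3), j₁)) j₂ =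
            some (gadNbr (0, j₁) (0, j₂)) := by
          simp [N, dnbr, hj]
        obtain ⟨u3, hu3⟩ := N_total hj hw2 (show j₃ ≠ cls (Sum.inl ((0 : Fin 3), j₁)) by
          simpa [cls] using h3ne)
        obtain ⟨u4, hu4⟩ := N_total hj hw2 (show j₄ ≠ cls (Sum.inl ((0 : Fin 3), j₁)) by
          simpa [cls] using h4ne)
        rw [hcU2 _ _ _ hu3, hcU2 _ _ _ hu4]
        have hp3 := N_pt_x hj hu3
        have hp4 := N_pt_x hj hu4
        rw [if_pos (hp4.mpr hj42)]
        by_cases h32 : j₃ = j₂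
        · rw [if_neg (fun hc => (hp3.mp hc) h32), if_pos ⟨hψx, h32⟩]
          norm_num
        · rw [if_pos (hp3.mpr h32), if_neg (fun hc => h32 hc.2), if_neg (fun hc => h32 hc.2)]
          norm_num
      · by_cases hwy : w = Sum.inl (1, j₁)
        · subst hwy
          have h3ne : j₃ ≠ j₁ := by
            rintro rfl
            exact hv3 (by rw [hψy]; exact (Finset.mem_inter.mp hy).2)
          have h4ne : j₄ ≠ j₁ := by
            rintro rfl
            exact hv4 (by rw [hψy]; exact (Finset.mem_inter.mp hy).2)
          have hw2 : N j₁ j₂ (Sum.inl ((1 : Fin 3), j₁)) j₂ =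
              some (gadNbr (1, j₁) (2, j₂)) := by
            simp [N, dnbr, hj]
          obtain ⟨u3, hu3⟩ := N_total hj hw2 (show j₃ ≠ cls (Sum.inl ((1 : Fin 3), j₁)) by
            simpa [cls] using h3ne)
          obtain ⟨u4, hu4⟩ := N_total hj hw2 (show j₄ ≠ cls (Sum.inl ((1 : Fin 3), j₁)) by
            simpa [cls] using h4ne)
          rw [hcU2 _ _ _ hu3, hcU2 _ _ _ hu4]
          have hp3 := N_pt_y hj hu3
          have hp4 := N_pt_y hj hu4
          have hvyx : ψ (Sum.inl ((1 : Fin 3), j₁)) ≠ x := by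
            rw [hψy]
            exact fun hc => hxy hc.symm
          rw [if_neg (fun hc => hj42 (hp4.mp hc))]
          by_cases h32 : j₃ = j₂
          · rw [if_pos (hp3.mpr h32), if_neg (fun hc => hvyx hc.1), if_pos ⟨hψy, h32⟩]
            norm_num
          · rw [if_neg (fun hc => h32 (hp3.mp hc)), if_neg (fun hc => h32 hc.2),
              if_neg (fun hc => h32 hc.2)]
            norm_num
        · have hvx : ψ w ≠ x := fun hc => hwx (ψ.injective (by rw [hψx, hc]))
          have hvy : ψ w ≠ y := fun hc => hwy (ψ.injective (by rw [hψy, hc]))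
          cases hN3 : N j₁ j₂ w j₃ with
          | none =>
            cases hN4 : N j₁ j₂ w j₄ with
            | none =>
              rw [hcU20 _ _ hN3, hcU20 _ _ hN4]
              simp [hvx, hvy]
            | some u4 =>
              exfalso
              obtain ⟨jw, hNw⟩ := adj_imp hj ((imp_adj hj hN4).symm)
              obtain ⟨hclsw, hmemw⟩ := hloc u4 jw w hNw
              have hwV : ψ w ∈ V jw := (Finset.mem_inter.mp hmemw).2
              have hjne : j₃ ≠ cls w := by
                rw [hclsw]
                rintro rfl
                exact hv3 hwV
              obtain ⟨u, hu⟩ := N_total hj hN4 hjne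
              rw [hN3] at hu
              cases hu
          | some u3 =>
            obtain ⟨jw, hNw⟩ := adj_imp hj ((imp_adj hj hN3).symm)
            obtain ⟨hclsw, hmemw⟩ := hloc u3 jw w hNw
            have hmw := Finset.mem_inter.mp hmemw
            have hw2 : pt w ≠ 2 := by
              intro hc
              rw [if_pos hc] at hmw
              exact Finset.disjoint_left.mp hU hvU1 hmw.1
            have hjne : j₄ ≠ cls w := by
              rw [hclsw]
              rintro rfl
              exact hv4 hmw.2
            obtain ⟨u4, hN4⟩ := N_total hj hN3 hjne
            rw [hcU2 _ _ _ hN3, hcU2 _ _ _ hN4]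
            have hiff := N_pt_gen hw2 hwx hwy hN3 hN4
            by_cases hp : pt u3 = 2
            · rw [if_pos hp, if_pos (hiff.mp hp)]
              simp [hvx, hvy]
            · rw [if_neg hp, if_neg (fun hc => hp (hiff.mpr hc))]
              simp [hvx, hvy]
    · have hvx : v ≠ x := fun hc => hv ⟨Sum.inl (0, j₁), hψx.trans hc.symm⟩
      have hvy : v ≠ y := fun hc => hv ⟨Sum.inl (1, j₁), hψy.trans hc.symm⟩
      rw [hrange v hv]
      simp [hvx, hvy]
end

section
/- Suppose 1/n ≪ η ≪ ε, 1/r and r ≥ 3. Let c_r = 1/25 if r = 3 and c_r = 9/(10^7 r^3) if r ≥ 4, and assume the K_r-decomposition theorem for r-partite graphs with minimum partite degree (1 − c'_r + ε)n (where c'_r = 1/25 for r=3 and 1/(10^6 r^3) for r≥4) holds. Let T_1,...,T_{r−2} be mutually orthogonal partial n×n Latin squares drawn in the same grid, such that each row, each column, and each symbol of each T_m is used at most (c_r − ε)n times. Then T_1,...,T_{r−2} can be completed to a sequence of mutually orthogonal n×n Latin squares. -/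
open Finset

/-- `G` has a `K_r`-decomposition: a collection of `r`-cliques which are pairwise
edge-disjoint and cover all edges of `G`. -/
def HasKrDecomp {β : Type*} [DecidableEq β] (r : ℕ) (G : SimpleGraph β) : Prop :=
  ∃ D : Finset (Finset β),
    (∀ S ∈ D, S.card = r) ∧
    (∀ S ∈ D, ∀ x ∈ S, ∀ y ∈ S, x ≠ y → G.Adj x y) ∧
    (∀ S ∈ D, ∀ T ∈ D, S ≠ T → (S ∩ T).card ≤ 1) ∧
    (∀ x y : β, G.Adj x y → ∃ S ∈ D, x ∈ S ∧ y ∈ S)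


section
variable {n r : ℕ} (cap B : ℕ) (Dom : Finset (Fin n × Fin n))
  (U : Fin (r - 2) → Fin n → Fin n → Option (Fin n))

lemma goodSymbol (hr : 3 ≤ r)
    (hrow : ∀ i : Fin n, (univ.filter fun j : Fin n => (i, j) ∈ Dom).card ≤ B)
    (hcol : ∀ j : Fin n, (univ.filter fun i : Fin n => (i, j) ∈ Dom).card ≤ B)
    (hfeas : 4 ≤ r → ∀ K : ℕ, K * cap ≤ n * B → 2 * B + (r - 3) * cap + K + 1 ≤ n)
    (I1 : ∀ m (p : Fin n × Fin n), U m p.1 p.2 ≠ none → p ∈ Dom)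
    (I2 : ∀ m i j j' k, U m i j = some k → U m i j' = some k → j = j')
    (I3 : ∀ m i i' j k, U m i j = some k → U m i' j = some k → i = i')
    (I4 : ∀ m m' (p q : Fin n × Fin n) k k', m ≠ m' → U m p.1 p.2 = some k →
      U m' p.1 p.2 = some k' → U m q.1 q.2 = some k → U m' q.1 q.2 = some k' → p = q)
    (I5 : ∀ m k, (univ.filter fun p : Fin n × Fin n => U m p.1 p.2 = some k).card ≤ cap)
    (I6 : r = 3 → ∀ m (p : Fin n × Fin n), p ∈ Dom → U m p.1 p.2 ≠ none)
    (m : Fin (r - 2)) (c : Fin n × Fin n) (hcD : c ∈ Dom) (hcnone : U m c.1 c.2 = none) :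
    ∃ k : Fin n,
      (∀ j, U m c.1 j ≠ some k) ∧
      (∀ i, U m i c.2 ≠ some k) ∧
      ((univ.filter fun p : Fin n × Fin n => U m p.1 p.2 = some k).card < cap) ∧
      (∀ m', m' ≠ m → ∀ k' (p : Fin n × Fin n), U m' c.1 c.2 = some k' →
        U m' p.1 p.2 = some k' → U m p.1 p.2 ≠ some k) := by
  -- first derive 4 ≤ r
  have hr4 : 4 ≤ r := by
    rcases Nat.lt_or_ge r 4 with h4 | h4
    · exfalso
      have hr3 : r = 3 := by omega
      exact I6 hr3 m c hcD hcnone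
    · exact h4
  classical
  set F1 : Finset (Fin n) := univ.filter (fun k => ∃ j, U m c.1 j = some k) with hF1def
  set F2 : Finset (Fin n) := univ.filter (fun k => ∃ i, U m i c.2 = some k) with hF2def
  set F3 : Finset (Fin n) := univ.filter (fun k =>
      cap ≤ (univ.filter fun p : Fin n × Fin n => U m p.1 p.2 = some k).card) with hF3def
  set F4 : Finset (Fin n) := univ.filter (fun k => ∃ m', m' ≠ m ∧ ∃ k', ∃ p : Fin n × Fin n,
      U m' c.1 c.2 = some k' ∧ U m' p.1 p.2 = some k' ∧ U m p.1 p.2 = some k) with hF4def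
  -- F1 bound
  have hF1 : F1.card ≤ B := by
    have hsub : F1 ⊆ (univ.filter fun j : Fin n => (c.1, j) ∈ Dom).image
        (fun j => (U m c.1 j).getD c.2) := by
      intro k hk
      rw [hF1def, mem_filter] at hk
      obtain ⟨-, j, hj⟩ := hk
      refine mem_image.mpr ⟨j, ?_, by rw [hj]; rfl⟩
      simp only [mem_filter, mem_univ, true_and]
      exact I1 m (c.1, j) (by simp [hj])
    calc F1.card ≤ _ := card_le_card hsub
      _ ≤ _ := card_image_le
      _ ≤ B := hrow c.1
  have hF2 : F2.card ≤ B := by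
    have hsub : F2 ⊆ (univ.filter fun i : Fin n => (i, c.2) ∈ Dom).image
        (fun i => (U m i c.2).getD c.2) := by
      intro k hk
      rw [hF2def, mem_filter] at hk
      obtain ⟨-, i, hi⟩ := hk
      refine mem_image.mpr ⟨i, ?_, by rw [hi]; rfl⟩
      simp only [mem_filter, mem_univ, true_and]
      exact I1 m (i, c.2) (by simp [hi])
    calc F2.card ≤ _ := card_le_card hsub
      _ ≤ _ := card_image_le
      _ ≤ B := hcol c.2
  -- F3 bound : F3.card * cap ≤ n * B
  have hF3 : F3.card * cap ≤ n * B := by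
    have hsum : ∀ k ∈ F3, cap ≤ (univ.filter fun p : Fin n × Fin n =>
        U m p.1 p.2 = some k).card := by
      intro k hk; rw [hF3def, mem_filter] at hk; exact hk.2
    have h1 : F3.card * cap ≤ ∑ k ∈ F3,
        (univ.filter fun p : Fin n × Fin n => U m p.1 p.2 = some k).card := by
      calc F3.card * cap = ∑ _k ∈ F3, cap := by rw [sum_const, smul_eq_mul]
        _ ≤ _ := sum_le_sum hsum
    have h2 : ∑ k ∈ F3, (univ.filter fun p : Fin n × Fin n =>
        U m p.1 p.2 = some k).card ≤ ∑ k : Fin n,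
        (univ.filter fun p : Fin n × Fin n => U m p.1 p.2 = some k).card := by
      apply sum_le_sum_of_subset (subset_univ F3)
    have h3 : ∑ k : Fin n, (univ.filter fun p : Fin n × Fin n =>
        U m p.1 p.2 = some k).card =
        (univ.filter fun p : Fin n × Fin n => U m p.1 p.2 ≠ none).card := by
      rw [Finset.card_eq_sum_card_fiberwise
        (f := fun p : Fin n × Fin n => (U m p.1 p.2).getD c.2)
        (t := univ) (fun x _ => mem_univ _)]
      apply sum_congr rfl
      intro k _
      congr 1
      ext p
      simp only [mem_filter, mem_univ, true_and]
      rcases hv : U m p.1 p.2 with _ | v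
      · simp
      · simp
    have h4 : (univ.filter fun p : Fin n × Fin n => U m p.1 p.2 ≠ none).card ≤ Dom.card :=
      card_le_card (fun p hp => I1 m p (by simpa using hp))
    have h5 : Dom.card ≤ n * B := by
      rw [Finset.card_eq_sum_card_fiberwise (f := fun p : Fin n × Fin n => p.1)
        (t := univ) (fun x _ => mem_univ _)]
      calc ∑ i : Fin n, (Dom.filter fun p => p.1 = i).card
          ≤ ∑ _i : Fin n, B := by
            apply sum_le_sum
            intro i _
            calc (Dom.filter fun p => p.1 = i).card
                ≤ (univ.filter fun j : Fin n => (i, j) ∈ Dom).card := by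
                  apply card_le_card_of_injOn (fun p => p.2)
                  · intro p hp
                    simp only [mem_coe, mem_filter, mem_univ, true_and]
                    rw [mem_coe, mem_filter] at hp
                    have : (i, p.2) = p := by rw [← hp.2]
                    rw [this]; exact hp.1
                  · intro p hp q hq h2
                    rw [mem_coe, mem_filter] at hp hq
                    exact Prod.ext (hp.2.trans hq.2.symm) h2
              _ ≤ B := hrow i
        _ = n * B := by simp [mul_comm]
    omega
  -- F4 bound
  have hF4 : F4.card ≤ (r - 3) * cap := by
    have hsub : F4 ⊆ (univ.erase m).biUnion (fun m' => univ.filter (fun k =>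
        ∃ k', ∃ p : Fin n × Fin n, U m' c.1 c.2 = some k' ∧ U m' p.1 p.2 = some k'
          ∧ U m p.1 p.2 = some k)) := by
      intro k hk
      rw [hF4def, mem_filter] at hk
      obtain ⟨-, m', hm', rest⟩ := hk
      refine mem_biUnion.mpr ⟨m', by simp [hm'], ?_⟩
      simp only [mem_filter, mem_univ, true_and]
      exact rest
    calc F4.card ≤ _ := card_le_card hsub
      _ ≤ ∑ m' ∈ univ.erase m, (univ.filter (fun k =>
        ∃ k', ∃ p : Fin n × Fin n, U m' c.1 c.2 = some k' ∧ U m' p.1 p.2 = some k'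
          ∧ U m p.1 p.2 = some k)).card := card_biUnion_le
      _ ≤ ∑ _m' ∈ univ.erase m, cap := by
          apply sum_le_sum
          intro m' _
          rcases hU : U m' c.1 c.2 with _ | k₀
          · simp
          · have hsub2 : (univ.filter (fun k => ∃ k', ∃ p : Fin n × Fin n,
                (some k₀ : Option (Fin n)) = some k' ∧ U m' p.1 p.2 = some k'
                  ∧ U m p.1 p.2 = some k))
                ⊆ (univ.filter fun p : Fin n × Fin n => U m' p.1 p.2 = some k₀).image
                  (fun p => (U m p.1 p.2).getD c.2) := by
              rintro k hk
              rw [mem_filter] at hk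
              obtain ⟨-, k', p, h1, h2, h3⟩ := hk
              injection h1 with h1
              subst h1
              refine mem_image.mpr ⟨p, ?_, by rw [h3]; rfl⟩
              simp only [mem_filter, mem_univ, true_and]; exact h2
            calc _ ≤ _ := card_le_card hsub2
              _ ≤ _ := card_image_le
              _ ≤ cap := I5 m' k₀
      _ = (r - 3) * cap := by
          rw [sum_const, smul_eq_mul, card_erase_of_mem (mem_univ m), card_univ,
            Fintype.card_fin]
          have h32 : r - 2 - 1 = r - 3 := by omega
          rw [h32]
  -- there is a good symbol
  have hcard : (F1 ∪ F2 ∪ F3 ∪ F4).card + 1 ≤ n := by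
    have := hfeas hr4 F3.card hF3
    have h1 : (F1 ∪ F2 ∪ F3 ∪ F4).card ≤ F1.card + F2.card + F3.card + F4.card := by
      calc (F1 ∪ F2 ∪ F3 ∪ F4).card ≤ (F1 ∪ F2 ∪ F3).card + F4.card := card_union_le _ _
        _ ≤ (F1 ∪ F2).card + F3.card + F4.card := by
            have := card_union_le (F1 ∪ F2) F3; omega
        _ ≤ F1.card + F2.card + F3.card + F4.card := by
            have := card_union_le F1 F2; omega
    omega
  have hex : ∃ k : Fin n, k ∉ F1 ∪ F2 ∪ F3 ∪ F4 := by
    by_contra h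
    push_neg at h
    have hsub : (univ : Finset (Fin n)) ⊆ F1 ∪ F2 ∪ F3 ∪ F4 := fun k _ => h k
    have := card_le_card hsub
    rw [card_univ, Fintype.card_fin] at this
    omega
  obtain ⟨k, hk⟩ := hex
  simp only [mem_union, not_or] at hk
  obtain ⟨⟨⟨hk1, hk2⟩, hk3⟩, hk4⟩ := hk
  rw [hF1def, mem_filter] at hk1
  rw [hF2def, mem_filter] at hk2
  rw [hF3def, mem_filter] at hk3
  rw [hF4def, mem_filter] at hk4
  push_neg at hk1 hk2 hk3 hk4
  refine ⟨k, ?_, ?_, ?_, ?_⟩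
  · intro j h; exact hk1 (mem_univ k) j h
  · intro i h; exact hk2 (mem_univ k) i h
  · exact hk3 (mem_univ k)
  · intro m' hm' k' p h1 h2 h3
    exact hk4 (mem_univ k) m' hm' k' p h1 h2 h3

end

/-- Greedy filling: extend `U` so that every cell of `Dom` is filled in every square,
preserving Latin, orthogonality and usage-cap invariants. -/
lemma fillAux {n r : ℕ} (hr : 3 ≤ r) (cap B : ℕ) (Dom : Finset (Fin n × Fin n))
    (hrow : ∀ i : Fin n, (univ.filter fun j : Fin n => (i, j) ∈ Dom).card ≤ B)
    (hcol : ∀ j : Fin n, (univ.filter fun i : Fin n => (i, j) ∈ Dom).card ≤ B)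
    (hfeas : 4 ≤ r → ∀ K : ℕ, K * cap ≤ n * B → 2 * B + (r - 3) * cap + K + 1 ≤ n) :
    ∀ (N : ℕ) (U : Fin (r - 2) → Fin n → Fin n → Option (Fin n)),
    (∀ m (p : Fin n × Fin n), U m p.1 p.2 ≠ none → p ∈ Dom) →
    (∀ m i j j' k, U m i j = some k → U m i j' = some k → j = j') →
    (∀ m i i' j k, U m i j = some k → U m i' j = some k → i = i') →
    (∀ m m' (p q : Fin n × Fin n) k k', m ≠ m' → U m p.1 p.2 = some k →
      U m' p.1 p.2 = some k' → U m q.1 q.2 = some k → U m' q.1 q.2 = some k' → p = q) →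
    (∀ m k, (univ.filter fun p : Fin n × Fin n => U m p.1 p.2 = some k).card ≤ cap) →
    (r = 3 → ∀ m (p : Fin n × Fin n), p ∈ Dom → U m p.1 p.2 ≠ none) →
    ((univ.filter fun q : Fin (r - 2) × Fin n × Fin n =>
        q.2 ∈ Dom ∧ U q.1 q.2.1 q.2.2 = none).card ≤ N) →
    ∃ W : Fin (r - 2) → Fin n → Fin n → Option (Fin n),
      (∀ m i j k, U m i j = some k → W m i j = some k) ∧
      (∀ m (p : Fin n × Fin n), W m p.1 p.2 ≠ none ↔ p ∈ Dom) ∧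
      (∀ m i j j' k, W m i j = some k → W m i j' = some k → j = j') ∧
      (∀ m i i' j k, W m i j = some k → W m i' j = some k → i = i') ∧
      (∀ m m' (p q : Fin n × Fin n) k k', m ≠ m' → W m p.1 p.2 = some k →
        W m' p.1 p.2 = some k' → W m q.1 q.2 = some k → W m' q.1 q.2 = some k' → p = q) ∧
      (∀ m k, (univ.filter fun p : Fin n × Fin n => W m p.1 p.2 = some k).card ≤ cap) := by
  intro N
  induction N with
  | zero =>
    intro U I1 I2 I3 I4 I5 _ hmiss
    refine ⟨U, fun m i j k h => h, fun m p => ⟨I1 m p, fun hp => ?_⟩, I2, I3, I4, I5⟩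
    intro hnone
    have : (m, p) ∈ (univ.filter fun q : Fin (r - 2) × Fin n × Fin n =>
        q.2 ∈ Dom ∧ U q.1 q.2.1 q.2.2 = none) := by
      simp only [mem_filter, mem_univ, true_and]; exact ⟨hp, hnone⟩
    have := card_pos.mpr ⟨_, this⟩
    omega
  | succ N ih =>
    intro U I1 I2 I3 I4 I5 I6 hmiss
    by_cases hne : (univ.filter fun q : Fin (r - 2) × Fin n × Fin n =>
        q.2 ∈ Dom ∧ U q.1 q.2.1 q.2.2 = none).Nonempty
    · obtain ⟨⟨m, c⟩, hq⟩ := hne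
      rw [mem_filter] at hq
      obtain ⟨-, hcD, hcnone⟩ := hq
      obtain ⟨k, hk1, hk2, hk3, hk4⟩ := goodSymbol cap B Dom U hr hrow hcol hfeas
        I1 I2 I3 I4 I5 I6 m c hcD hcnone
      set U' : Fin (r - 2) → Fin n → Fin n → Option (Fin n) :=
        fun m'' i j => if m'' = m ∧ i = c.1 ∧ j = c.2 then some k else U m'' i j with hU'
      have hkeep : ∀ m'' i j k'', U m'' i j = some k'' → U' m'' i j = some k'' := by
        intro m'' i j k'' h
        rw [hU']
        dsimp only
        rw [if_neg]
        · exact h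
        · rintro ⟨rfl, rfl, rfl⟩
          rw [hcnone] at h
          cases h
      have hnew : ∀ m'' (p : Fin n × Fin n) k'', U' m'' p.1 p.2 = some k'' →
          (m'' = m ∧ p = c ∧ k'' = k) ∨ U m'' p.1 p.2 = some k'' := by
        intro m'' p k'' h
        rw [hU'] at h
        dsimp only at h
        split_ifs at h with hcond
        · left
          injection h with h
          exact ⟨hcond.1, Prod.ext hcond.2.1 hcond.2.2, h.symm⟩
        · right; exact h
      have hUc : U' m c.1 c.2 = some k := by
        rw [hU']; dsimp only; rw [if_pos ⟨rfl, rfl, rfl⟩]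
      -- invariants for U'
      have J1 : ∀ m'' (p : Fin n × Fin n), U' m'' p.1 p.2 ≠ none → p ∈ Dom := by
        intro m'' p h
        rcases hv : U' m'' p.1 p.2 with _ | v
        · exact absurd hv h
        · rcases hnew m'' p v hv with ⟨-, rfl, -⟩ | hold
          · exact hcD
          · exact I1 m'' p (by simp [hold])
      have J2 : ∀ m'' i j j' k'', U' m'' i j = some k'' → U' m'' i j' = some k'' → j = j' := by
        intro m'' i j j' k'' h h'
        rcases hnew m'' (i, j) k'' h with ⟨rfl, hp, rfl⟩ | hold
        · rcases hnew m'' (i, j') k'' h' with ⟨-, hp', -⟩ | hold'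
          · rw [Prod.ext_iff] at hp hp'
            exact hp.2.trans hp'.2.symm
          · exfalso
            rw [Prod.ext_iff] at hp
            exact hk1 j' (hp.1 ▸ hold')
        · rcases hnew m'' (i, j') k'' h' with ⟨rfl, hp', rfl⟩ | hold'
          · exfalso
            rw [Prod.ext_iff] at hp'
            exact hk1 j (hp'.1 ▸ hold)
          · exact I2 m'' i j j' k'' hold hold'
      have J3 : ∀ m'' i i' j k'', U' m'' i j = some k'' → U' m'' i' j = some k'' → i = i' := by
        intro m'' i i' j k'' h h'
        rcases hnew m'' (i, j) k'' h with ⟨rfl, hp, rfl⟩ | hold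
        · rcases hnew m'' (i', j) k'' h' with ⟨-, hp', -⟩ | hold'
          · rw [Prod.ext_iff] at hp hp'
            exact hp.1.trans hp'.1.symm
          · exfalso
            rw [Prod.ext_iff] at hp
            exact hk2 i' (hp.2 ▸ hold')
        · rcases hnew m'' (i', j) k'' h' with ⟨rfl, hp', rfl⟩ | hold'
          · exfalso
            rw [Prod.ext_iff] at hp'
            exact hk2 i (hp'.2 ▸ hold)
          · exact I3 m'' i i' j k'' hold hold'
      have J4 : ∀ m1 m2 (p q : Fin n × Fin n) k1 k2, m1 ≠ m2 → U' m1 p.1 p.2 = some k1 →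
          U' m2 p.1 p.2 = some k2 → U' m1 q.1 q.2 = some k1 → U' m2 q.1 q.2 = some k2 →
          p = q := by
        have key : ∀ m1 m2 (p q : Fin n × Fin n) k1 k2, m1 ≠ m2 →
            U' m2 p.1 p.2 = some k2 →
            U' m1 q.1 q.2 = some k1 → U' m2 q.1 q.2 = some k2 →
            (m1 = m ∧ p = c ∧ k1 = k) → p = q := by
          intro m1 m2 p q k1 k2 hne12 h2 h3 h4 hE
          obtain ⟨e1, e2, e3⟩ := hE
          rcases hnew m1 q k1 h3 with ⟨-, g2, -⟩ | o3
          · exact e2.trans g2.symm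
          · rcases hnew m2 q k2 h4 with ⟨d1, -, -⟩ | o4
            · exact absurd (e1.trans d1.symm) hne12
            · rcases hnew m2 p k2 h2 with ⟨f1, -, -⟩ | o2
              · exact absurd (e1.trans f1.symm) hne12
              · exfalso
                refine hk4 m2 (fun h => hne12 (e1.trans h.symm)) k2 q ?_ o4 ?_
                · rw [← e2]; exact o2
                · exact e1 ▸ e3 ▸ o3
        intro m1 m2 p q k1 k2 hne12 h1 h2 h3 h4
        rcases hnew m1 p k1 h1 with e | o1
        · exact key m1 m2 p q k1 k2 hne12 h2 h3 h4 e
        · rcases hnew m1 q k1 h3 with g | o3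
          · exact (key m1 m2 q p k1 k2 hne12 h4 h1 h2 g).symm
          · rcases hnew m2 p k2 h2 with f | o2
            · exact key m2 m1 p q k2 k1 (Ne.symm hne12) h1 h4 h3 f
            · rcases hnew m2 q k2 h4 with d | o4
              · exact (key m2 m1 q p k2 k1 (Ne.symm hne12) h3 h2 h1 d).symm
              · exact I4 m1 m2 p q k1 k2 hne12 o1 o2 o3 o4
      have J5 : ∀ m'' k'', (univ.filter fun p : Fin n × Fin n =>
          U' m'' p.1 p.2 = some k'').card ≤ cap := by
        intro m'' k''
        by_cases hc : m'' = m ∧ k'' = k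
        · obtain ⟨rfl, rfl⟩ := hc
          have : (univ.filter fun p : Fin n × Fin n => U' m'' p.1 p.2 = some k'') =
              insert c (univ.filter fun p : Fin n × Fin n => U m'' p.1 p.2 = some k'') := by
            ext p
            simp only [mem_insert, mem_filter, mem_univ, true_and]
            constructor
            · intro h
              rcases hnew m'' p k'' h with ⟨-, rfl, -⟩ | hold
              · exact Or.inl rfl
              · exact Or.inr hold
            · rintro (rfl | h)
              · exact hUc
              · exact hkeep m'' p.1 p.2 k'' h
          rw [this, card_insert_of_notMem (by
            simp only [mem_filter, mem_univ, true_and]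
            rw [hcnone]
            exact fun h => by cases h)]
          omega
        · have : (univ.filter fun p : Fin n × Fin n => U' m'' p.1 p.2 = some k'') =
              (univ.filter fun p : Fin n × Fin n => U m'' p.1 p.2 = some k'') := by
            ext p
            simp only [mem_filter, mem_univ, true_and]
            constructor
            · intro h
              rcases hnew m'' p k'' h with ⟨h1, -, h3⟩ | hold
              · exact absurd ⟨h1, h3⟩ hc
              · exact hold
            · exact hkeep m'' p.1 p.2 k''
          rw [this]
          exact I5 m'' k''
      have J6 : r = 3 → ∀ m'' (p : Fin n × Fin n), p ∈ Dom → U' m'' p.1 p.2 ≠ none := by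
        intro h3
        exfalso
        have h4 : 4 ≤ r := by
          rcases Nat.lt_or_ge r 4 with h | h
          · exact absurd (I6 (by omega) m c hcD) (fun hh => hh hcnone)
          · exact h
        omega
      have hmiss' : (univ.filter fun q : Fin (r - 2) × Fin n × Fin n =>
          q.2 ∈ Dom ∧ U' q.1 q.2.1 q.2.2 = none).card ≤ N := by
        have hsub : (univ.filter fun q : Fin (r - 2) × Fin n × Fin n =>
            q.2 ∈ Dom ∧ U' q.1 q.2.1 q.2.2 = none) ⊆
            (univ.filter fun q : Fin (r - 2) × Fin n × Fin n =>
            q.2 ∈ Dom ∧ U q.1 q.2.1 q.2.2 = none).erase (m, c) := by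
          intro q hq2
          rw [mem_filter] at hq2
          obtain ⟨-, hqD, hqnone⟩ := hq2
          rw [mem_erase, mem_filter]
          constructor
          · rintro rfl
            rw [hUc] at hqnone
            cases hqnone
          · refine ⟨mem_univ _, hqD, ?_⟩
            rcases hv : U q.1 q.2.1 q.2.2 with _ | v
            · rfl
            · exfalso
              rw [hkeep q.1 q.2.1 q.2.2 v hv] at hqnone
              cases hqnone
        have hmem : (m, c) ∈ (univ.filter fun q : Fin (r - 2) × Fin n × Fin n =>
            q.2 ∈ Dom ∧ U q.1 q.2.1 q.2.2 = none) := by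
          rw [mem_filter]; exact ⟨mem_univ _, hcD, hcnone⟩
        have := card_le_card hsub
        rw [card_erase_of_mem hmem] at this
        have hpos := card_pos.mpr ⟨_, hmem⟩
        omega
      obtain ⟨W, hWext, hWdom, hW2, hW3, hW4, hW5⟩ := ih U' J1 J2 J3 J4 J5 J6 hmiss'
      exact ⟨W, fun m'' i j k'' h => hWext m'' i j k'' (hkeep m'' i j k'' h),
        hWdom, hW2, hW3, hW4, hW5⟩
    · refine ⟨U, fun m i j k h => h, fun m p => ⟨I1 m p, fun hp => ?_⟩, I2, I3, I4, I5⟩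
      intro hnone
      exact hne ⟨(m, p), by simp only [mem_filter, mem_univ, true_and]; exact ⟨hp, hnone⟩⟩

/-! Auxiliary definitions for the `r`-partite graph associated to a sequence of
partial mutually orthogonal Latin squares. -/

def sigAux {r : ℕ} (hr : 3 ≤ r) (a : Fin r) : Fin (r - 2) :=
  ⟨a.val - 2, by have := a.isLt; omega⟩

def iotAux {r : ℕ} (m : Fin (r - 2)) : Fin r :=
  ⟨m.val + 2, by have := m.isLt; omega⟩

lemma sig_iot {r : ℕ} (hr : 3 ≤ r) (m : Fin (r - 2)) : sigAux hr (iotAux m) = m := by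
  apply Fin.ext; simp [sigAux, iotAux]

lemma iot_val {r : ℕ} (m : Fin (r - 2)) : (iotAux m : Fin r).val = m.val + 2 := rfl

def QAux {n r : ℕ} (hr : 3 ≤ r) (W : Fin (r - 2) → Fin n → Fin n → Option (Fin n))
    (a : Fin r) (x : Fin n) (p : Fin n × Fin n) : Prop :=
  if a.val = 0 then p.1 = x
  else if a.val = 1 then p.2 = x
  else W (sigAux hr a) p.1 p.2 = some x

lemma Q_row {n r : ℕ} (hr : 3 ≤ r) (W : Fin (r - 2) → Fin n → Fin n → Option (Fin n))
    {a : Fin r} (h : a.val = 0) (x : Fin n) (p : Fin n × Fin n) :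
    QAux hr W a x p ↔ p.1 = x := by
  unfold QAux; rw [if_pos h]

lemma Q_col {n r : ℕ} (hr : 3 ≤ r) (W : Fin (r - 2) → Fin n → Fin n → Option (Fin n))
    {a : Fin r} (h : a.val = 1) (x : Fin n) (p : Fin n × Fin n) :
    QAux hr W a x p ↔ p.2 = x := by
  unfold QAux; rw [if_neg (by omega), if_pos h]

lemma Q_sym {n r : ℕ} (hr : 3 ≤ r) (W : Fin (r - 2) → Fin n → Fin n → Option (Fin n))
    {a : Fin r} (h0 : ¬a.val = 0) (h1 : ¬a.val = 1) (x : Fin n) (p : Fin n × Fin n) :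
    QAux hr W a x p ↔ W (sigAux hr a) p.1 p.2 = some x := by
  unfold QAux; rw [if_neg h0, if_neg h1]

lemma Q_iot {n r : ℕ} (hr : 3 ≤ r) (W : Fin (r - 2) → Fin n → Fin n → Option (Fin n))
    (m : Fin (r - 2)) (x : Fin n) (p : Fin n × Fin n) :
    QAux hr W (iotAux m) x p ↔ W m p.1 p.2 = some x := by
  rw [Q_sym hr W (by rw [iot_val]; omega) (by rw [iot_val]; omega), sig_iot]

def chiAux {n r : ℕ} (hr : 3 ≤ r) (W : Fin (r - 2) → Fin n → Fin n → Option (Fin n))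
    (b : Fin r) (p : Fin n × Fin n) : Fin n :=
  if b.val = 0 then p.1 else if b.val = 1 then p.2 else (W (sigAux hr b) p.1 p.2).getD p.1

lemma chi_row {n r : ℕ} (hr : 3 ≤ r) (W : Fin (r - 2) → Fin n → Fin n → Option (Fin n))
    {b : Fin r} (h : b.val = 0) (p : Fin n × Fin n) : chiAux hr W b p = p.1 := by
  unfold chiAux; rw [if_pos h]

lemma chi_col {n r : ℕ} (hr : 3 ≤ r) (W : Fin (r - 2) → Fin n → Fin n → Option (Fin n))
    {b : Fin r} (h : b.val = 1) (p : Fin n × Fin n) : chiAux hr W b p = p.2 := by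
  unfold chiAux; rw [if_neg (by omega), if_pos h]

lemma chi_sym {n r : ℕ} (hr : 3 ≤ r) (W : Fin (r - 2) → Fin n → Fin n → Option (Fin n))
    {b : Fin r} (h0 : ¬b.val = 0) (h1 : ¬b.val = 1) (p : Fin n × Fin n) :
    chiAux hr W b p = (W (sigAux hr b) p.1 p.2).getD p.1 := by
  unfold chiAux; rw [if_neg h0, if_neg h1]

def UsedAux {n r : ℕ} (hr : 3 ≤ r) (W : Fin (r - 2) → Fin n → Fin n → Option (Fin n))
    (Dom : Finset (Fin n × Fin n)) (a : Fin r) (x : Fin n) (b : Fin r) (y : Fin n) : Prop :=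
  ∃ p : Fin n × Fin n, (p ∈ Dom ∧ QAux hr W a x p) ∧ (p ∈ Dom ∧ QAux hr W b y p)

def GAux {n r : ℕ} (hr : 3 ≤ r) (W : Fin (r - 2) → Fin n → Fin n → Option (Fin n))
    (Dom : Finset (Fin n × Fin n)) : SimpleGraph (Fin r × Fin n) where
  Adj u v := u.1 ≠ v.1 ∧ ¬UsedAux hr W Dom u.1 u.2 v.1 v.2
  symm := ⟨by
    rintro u v ⟨h1, h2⟩
    exact ⟨Ne.symm h1, fun hw => h2 (by obtain ⟨p, ha, hb⟩ := hw; exact ⟨p, hb, ha⟩)⟩⟩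
  loopless := ⟨fun u h => h.1 rfl⟩

lemma GAux_adj {n r : ℕ} (hr : 3 ≤ r) (W : Fin (r - 2) → Fin n → Fin n → Option (Fin n))
    (Dom : Finset (Fin n × Fin n)) (u v : Fin r × Fin n) :
    (GAux hr W Dom).Adj u v ↔ u.1 ≠ v.1 ∧ ¬UsedAux hr W Dom u.1 u.2 v.1 v.2 := Iff.rfl

lemma step2 {n r : ℕ} (hr : 3 ≤ r) (M : ℕ) (δ : ℝ)
    (Dom : Finset (Fin n × Fin n))
    (W : Fin (r - 2) → Fin n → Fin n → Option (Fin n))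
    (hdom : ∀ m (p : Fin n × Fin n), W m p.1 p.2 ≠ none ↔ p ∈ Dom)
    (lat1 : ∀ m i j j' k, W m i j = some k → W m i j' = some k → j = j')
    (lat2 : ∀ m i i' j k, W m i j = some k → W m i' j = some k → i = i')
    (ortho : ∀ m m' (p q : Fin n × Fin n) k k', m ≠ m' → W m p.1 p.2 = some k →
      W m' p.1 p.2 = some k' → W m q.1 q.2 = some k → W m' q.1 q.2 = some k' → p = q)
    (hrowM : ∀ i : Fin n, (univ.filter fun j : Fin n => (i, j) ∈ Dom).card ≤ M)
    (hcolM : ∀ j : Fin n, (univ.filter fun i : Fin n => (i, j) ∈ Dom).card ≤ M)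
    (husesM : ∀ m k, (univ.filter fun p : Fin n × Fin n => W m p.1 p.2 = some k).card ≤ M)
    (hδ : δ ≤ ((n - M : ℕ) : ℝ))
    (hdec : ∀ (V : Fin r → Finset (Fin r × Fin n)) (G : SimpleGraph (Fin r × Fin n)),
        (∀ j₁ j₂ : Fin r, j₁ ≠ j₂ → Disjoint (V j₁) (V j₂)) →
        (∀ x, ∃ j, x ∈ V j) →
        (∀ j, (V j).card = n) →
        (∀ x y, G.Adj x y → ∃ j₁ j₂ : Fin r, j₁ ≠ j₂ ∧ x ∈ V j₁ ∧ y ∈ V j₂) →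
        (∀ j₁ j₂ : Fin r, ∀ v, v ∉ V j₁ → v ∉ V j₂ →
          ((V j₁ : Set (Fin r × Fin n)) ∩ G.neighborSet v).ncard =
            ((V j₂ : Set (Fin r × Fin n)) ∩ G.neighborSet v).ncard) →
        (∀ (j : Fin r) v, v ∉ V j →
          δ ≤ (((V j : Set (Fin r × Fin n)) ∩ G.neighborSet v).ncard : ℝ)) →
        HasKrDecomp r G) :
    ∃ L : Fin (r - 2) → Fin n → Fin n → Fin n,
      (∀ m i j j', L m i j = L m i j' → j = j') ∧
      (∀ m i i' j, L m i j = L m i' j → i = i') ∧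
      (∀ m m' i j i' j', m ≠ m' → L m i j = L m i' j' → L m' i j = L m' i' j' →
        i = i' ∧ j = j') ∧
      (∀ m i j k, W m i j = some k → L m i j = k) := by
  classical
  obtain ⟨v0, hv0val⟩ : ∃ a : Fin r, a.val = 0 := ⟨⟨0, by omega⟩, rfl⟩
  obtain ⟨v1, hv1val⟩ : ∃ a : Fin r, a.val = 1 := ⟨⟨1, by omega⟩, rfl⟩
  set G := GAux hr W Dom with hG
  set Vp : Fin r → Finset (Fin r × Fin n) :=
    fun a => univ.filter (fun u => u.1 = a) with hVp
  have hmemV : ∀ (u : Fin r × Fin n) a, u ∈ Vp a ↔ u.1 = a := by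
    intro u a; rw [hVp]; simp
  have hWval : ∀ (mm : Fin (r - 2)) (p : Fin n × Fin n), p ∈ Dom →
      W mm p.1 p.2 = some ((W mm p.1 p.2).getD p.1) := by
    intro mm p hp
    rcases hw : W mm p.1 p.2 with _ | z
    · exact absurd hw ((hdom mm p).mpr hp)
    · rfl
  have degcount : ∀ (v : Fin r × Fin n) (b : Fin r), b ≠ v.1 →
      (univ.filter fun u : Fin r × Fin n => u.1 = b ∧ G.Adj v u).card
        = n - (univ.filter fun p : Fin n × Fin n => p ∈ Dom ∧ QAux hr W v.1 v.2 p).card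
      ∧ (univ.filter fun p : Fin n × Fin n => p ∈ Dom ∧ QAux hr W v.1 v.2 p).card ≤ n := by
    intro v b hb
    have hbv : b.val ≠ v.1.val := fun h => hb (Fin.ext h)
    set Ov : Finset (Fin n × Fin n) :=
      univ.filter (fun p => p ∈ Dom ∧ QAux hr W v.1 v.2 p) with hOv
    have hQb : ∀ (y : Fin n) (p : Fin n × Fin n), p ∈ Dom →
        (QAux hr W b y p ↔ chiAux hr W b p = y) := by
      intro y p hp
      by_cases h0 : b.val = 0
      · rw [Q_row hr W h0, chi_row hr W h0]
      · by_cases h1 : b.val = 1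
        · rw [Q_col hr W h1, chi_col hr W h1]
        · rw [Q_sym hr W h0 h1, chi_sym hr W h0 h1, hWval (sigAux hr b) p hp]
          simp
    have hχinj : ∀ p ∈ Ov, ∀ q ∈ Ov, chiAux hr W b p = chiAux hr W b q → p = q := by
      intro p hp q hq hpq
      rw [hOv, mem_filter] at hp hq
      obtain ⟨-, hpD, hpQ⟩ := hp
      obtain ⟨-, hqD, hqQ⟩ := hq
      by_cases hv0' : v.1.val = 0
      · rw [Q_row hr W hv0'] at hpQ hqQ
        have h11 : p.1 = q.1 := hpQ.trans hqQ.symm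
        by_cases hb0 : b.val = 0
        · omega
        · by_cases hb1 : b.val = 1
          · rw [chi_col hr W hb1, chi_col hr W hb1] at hpq
            exact Prod.ext h11 hpq
          · rw [chi_sym hr W hb0 hb1, chi_sym hr W hb0 hb1] at hpq
            have hwp := hWval (sigAux hr b) p hpD
            have hwq := hWval (sigAux hr b) q hqD
            rw [← hpq] at hwq
            rw [← h11] at hwq
            exact Prod.ext h11 (lat1 (sigAux hr b) p.1 p.2 q.2 _ hwp hwq)
      · by_cases hv1' : v.1.val = 1
        · rw [Q_col hr W hv1'] at hpQ hqQ
          have h22 : p.2 = q.2 := hpQ.trans hqQ.symm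
          by_cases hb0 : b.val = 0
          · rw [chi_row hr W hb0, chi_row hr W hb0] at hpq
            exact Prod.ext hpq h22
          · by_cases hb1 : b.val = 1
            · omega
            · rw [chi_sym hr W hb0 hb1, chi_sym hr W hb0 hb1] at hpq
              have hwp := hWval (sigAux hr b) p hpD
              have hwq := hWval (sigAux hr b) q hqD
              rw [← hpq] at hwq
              rw [← h22] at hwq
              exact Prod.ext (lat2 (sigAux hr b) p.1 q.1 p.2 _ hwp hwq) h22
        · rw [Q_sym hr W hv0' hv1'] at hpQ hqQ
          by_cases hb0 : b.val = 0
          · rw [chi_row hr W hb0, chi_row hr W hb0] at hpq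
            rw [← hpq] at hqQ
            exact Prod.ext hpq (lat1 (sigAux hr v.1) p.1 p.2 q.2 _ hpQ hqQ)
          · by_cases hb1 : b.val = 1
            · rw [chi_col hr W hb1, chi_col hr W hb1] at hpq
              rw [← hpq] at hqQ
              exact Prod.ext (lat2 (sigAux hr v.1) p.1 q.1 p.2 _ hpQ hqQ) hpq
            · rw [chi_sym hr W hb0 hb1, chi_sym hr W hb0 hb1] at hpq
              have hwp := hWval (sigAux hr b) p hpD
              have hwq := hWval (sigAux hr b) q hqD
              rw [← hpq] at hwq
              have hσne : sigAux hr v.1 ≠ sigAux hr b := by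
                intro h
                have := congrArg Fin.val h
                simp only [sigAux] at this
                omega
              exact ortho (sigAux hr v.1) (sigAux hr b) p q _ _ hσne hpQ hwp hqQ hwq
    have himg : univ.filter (fun y : Fin n => UsedAux hr W Dom v.1 v.2 b y)
        = Ov.image (chiAux hr W b) := by
      ext y
      simp only [mem_filter, mem_univ, true_and, mem_image]
      constructor
      · rintro ⟨p, ⟨hpD, hpQv⟩, ⟨-, hpQb⟩⟩
        exact ⟨p, by rw [hOv, mem_filter]; exact ⟨mem_univ _, hpD, hpQv⟩,
          (hQb y p hpD).mp hpQb⟩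
      · rintro ⟨p, hp, hχp⟩
        rw [hOv, mem_filter] at hp
        exact ⟨p, ⟨hp.2.1, hp.2.2⟩, ⟨hp.2.1, (hQb y p hp.2.1).mpr hχp⟩⟩
    have hcardim : (Ov.image (chiAux hr W b)).card = Ov.card :=
      card_image_of_injOn (fun p hp q hq h => hχinj p hp q hq h)
    have hOvn : Ov.card ≤ n := by
      calc Ov.card = (Ov.image (chiAux hr W b)).card := hcardim.symm
        _ ≤ (univ : Finset (Fin n)).card := card_le_card (subset_univ _)
        _ = n := by simp
    have hsplit : (univ.filter fun u : Fin r × Fin n => u.1 = b ∧ G.Adj v u)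
        = (univ.filter fun y : Fin n => ¬UsedAux hr W Dom v.1 v.2 b y).image
            (fun y => (b, y)) := by
      ext u
      simp only [mem_filter, mem_univ, true_and, mem_image]
      constructor
      · rintro ⟨hub, hadj⟩
        rw [hG, GAux_adj] at hadj
        exact ⟨u.2, hub ▸ hadj.2, Prod.ext hub.symm rfl⟩
      · rintro ⟨y, hy, rfl⟩
        refine ⟨rfl, ?_⟩
        rw [hG, GAux_adj]
        exact ⟨Ne.symm hb, hy⟩
    have hc1 : (univ.filter fun y : Fin n => ¬UsedAux hr W Dom v.1 v.2 b y).card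
        = n - (univ.filter fun y : Fin n => UsedAux hr W Dom v.1 v.2 b y).card := by
      have hx : (univ.filter fun y : Fin n => ¬UsedAux hr W Dom v.1 v.2 b y)
          = univ \ (univ.filter fun y : Fin n => UsedAux hr W Dom v.1 v.2 b y) := by
        ext y; simp
      rw [hx, card_sdiff_of_subset (filter_subset _ _), card_univ, Fintype.card_fin]
    constructor
    · rw [hsplit, card_image_of_injective _ (fun a1 a2 h => by injection h), hc1,
        himg, hcardim]
    · exact hOvn
  -- occupancy bounded by M
  have hOvM : ∀ v : Fin r × Fin n,
      (univ.filter fun p : Fin n × Fin n => p ∈ Dom ∧ QAux hr W v.1 v.2 p).card ≤ M := by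
    intro v
    by_cases h0 : v.1.val = 0
    · calc (univ.filter fun p : Fin n × Fin n => p ∈ Dom ∧ QAux hr W v.1 v.2 p).card
          ≤ (univ.filter fun j : Fin n => (v.2, j) ∈ Dom).card := by
            apply card_le_card_of_injOn (fun p => p.2)
            · intro p hp
              rw [mem_coe, mem_filter] at hp
              obtain ⟨-, hpD, hpQ⟩ := hp
              rw [Q_row hr W h0] at hpQ
              simp only [mem_coe, mem_filter, mem_univ, true_and]
              have : (v.2, p.2) = p := Prod.ext hpQ.symm rfl
              rw [this]; exact hpD
            · intro p hp q hq h2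
              rw [mem_coe, mem_filter] at hp hq
              obtain ⟨-, -, hpQ⟩ := hp
              obtain ⟨-, -, hqQ⟩ := hq
              rw [Q_row hr W h0] at hpQ hqQ
              exact Prod.ext (hpQ.trans hqQ.symm) h2
      _ ≤ M := hrowM v.2
    · by_cases h1 : v.1.val = 1
      · calc (univ.filter fun p : Fin n × Fin n => p ∈ Dom ∧ QAux hr W v.1 v.2 p).card
            ≤ (univ.filter fun i : Fin n => (i, v.2) ∈ Dom).card := by
              apply card_le_card_of_injOn (fun p => p.1)
              · intro p hp
                rw [mem_coe, mem_filter] at hp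
                obtain ⟨-, hpD, hpQ⟩ := hp
                rw [Q_col hr W h1] at hpQ
                simp only [mem_coe, mem_filter, mem_univ, true_and]
                have : (p.1, v.2) = p := Prod.ext rfl hpQ.symm
                rw [this]; exact hpD
              · intro p hp q hq h2
                rw [mem_coe, mem_filter] at hp hq
                obtain ⟨-, -, hpQ⟩ := hp
                obtain ⟨-, -, hqQ⟩ := hq
                rw [Q_col hr W h1] at hpQ hqQ
                exact Prod.ext h2 (hpQ.trans hqQ.symm)
        _ ≤ M := hcolM v.2
      · calc (univ.filter fun p : Fin n × Fin n => p ∈ Dom ∧ QAux hr W v.1 v.2 p).card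
            ≤ (univ.filter fun p : Fin n × Fin n =>
                W (sigAux hr v.1) p.1 p.2 = some v.2).card := by
              apply card_le_card
              intro p hp
              rw [mem_filter] at hp
              obtain ⟨-, -, hpQ⟩ := hp
              rw [Q_sym hr W h0 h1] at hpQ
              simp only [mem_filter, mem_univ, true_and]
              exact hpQ
        _ ≤ M := husesM (sigAux hr v.1) v.2
  -- apply the decomposition hypothesis
  have hVcard : ∀ a : Fin r, (Vp a).card = n := by
    intro a
    simp only [hVp]
    have himg : (univ.filter fun u : Fin r × Fin n => u.1 = a)
        = univ.image (fun y : Fin n => (a, y)) := by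
      ext u
      simp only [mem_filter, mem_univ, true_and, mem_image]
      constructor
      · intro h; exact ⟨u.2, Prod.ext h.symm rfl⟩
      · rintro ⟨y, rfl⟩; rfl
    rw [himg, card_image_of_injective _ (fun a1 a2 h => by injection h), card_univ,
      Fintype.card_fin]
  have hKr : HasKrDecomp r G := by
    apply hdec Vp G
    · intro j1 j2 hne
      rw [disjoint_left]
      intro u hu1 hu2
      rw [hmemV] at hu1 hu2
      exact hne (hu1 ▸ hu2)
    · intro x
      exact ⟨x.1, (hmemV x x.1).mpr rfl⟩
    · exact hVcard
    · intro x y hxy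
      rw [hG, GAux_adj] at hxy
      exact ⟨x.1, y.1, hxy.1, (hmemV x x.1).mpr rfl, (hmemV y y.1).mpr rfl⟩
    · intro j1 j2 v hv1 hv2
      rw [hmemV] at hv1 hv2
      have e1 : ((Vp j1 : Set (Fin r × Fin n)) ∩ G.neighborSet v)
          = ↑(univ.filter fun u : Fin r × Fin n => u.1 = j1 ∧ G.Adj v u) := by
        ext u
        simp only [Set.mem_inter_iff, mem_coe, mem_filter, mem_univ, true_and,
          SimpleGraph.mem_neighborSet, hmemV]
      have e2 : ((Vp j2 : Set (Fin r × Fin n)) ∩ G.neighborSet v)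
          = ↑(univ.filter fun u : Fin r × Fin n => u.1 = j2 ∧ G.Adj v u) := by
        ext u
        simp only [Set.mem_inter_iff, mem_coe, mem_filter, mem_univ, true_and,
          SimpleGraph.mem_neighborSet, hmemV]
      rw [e1, e2, Set.ncard_coe_finset, Set.ncard_coe_finset,
        (degcount v j1 (fun h => hv1 h.symm)).1, (degcount v j2 (fun h => hv2 h.symm)).1]
    · intro b v hv
      rw [hmemV] at hv
      have e1 : ((Vp b : Set (Fin r × Fin n)) ∩ G.neighborSet v)
          = ↑(univ.filter fun u : Fin r × Fin n => u.1 = b ∧ G.Adj v u) := by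
        ext u
        simp only [Set.mem_inter_iff, mem_coe, mem_filter, mem_univ, true_and,
          SimpleGraph.mem_neighborSet, hmemV]
      rw [e1, Set.ncard_coe_finset, (degcount v b (fun h => hv h.symm)).1]
      refine le_trans hδ ?_
      have h1 := hOvM v
      have h2 := (degcount v b (fun h => hv h.symm)).2
      have : n - M ≤ n - (univ.filter fun p : Fin n × Fin n =>
          p ∈ Dom ∧ QAux hr W v.1 v.2 p).card := by omega
      exact_mod_cast Nat.cast_le.mpr this
  obtain ⟨D, hDcard, hDclique, hDdisj, hDcover⟩ := hKr
  -- extraction of the completed squares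
  have huniq : ∀ S ∈ D, ∀ u w : Fin r × Fin n, u ∈ S → w ∈ S → u.1 = w.1 → u = w := by
    intro S hS u w hu hw h1
    by_contra hne
    have := hDclique S hS u hu w hw hne
    rw [hG, GAux_adj] at this
    exact this.1 h1
  have hvert : ∀ S ∈ D, ∀ a : Fin r, ∃ u : Fin r × Fin n, u ∈ S ∧ u.1 = a := by
    intro S hS a
    have hinj : Set.InjOn Prod.fst ↑S := fun u hu w hw h =>
      huniq S hS u w (mem_coe.mp hu) (mem_coe.mp hw) h
    have hcard2 : (S.image Prod.fst).card = r := by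
      rw [card_image_of_injOn hinj, hDcard S hS]
    have huniv : S.image Prod.fst = univ :=
      eq_univ_of_card _ (by rw [hcard2, Fintype.card_fin])
    have : a ∈ S.image Prod.fst := huniv ▸ mem_univ a
    obtain ⟨u, hu, hua⟩ := mem_image.mp this
    exact ⟨u, hu, hua⟩
  have hglue : ∀ S ∈ D, ∀ S' ∈ D, ∀ u w : Fin r × Fin n, u ≠ w → u ∈ S → w ∈ S →
      u ∈ S' → w ∈ S' → S = S' := by
    intro S hS S' hS' u w huw hu hw hu' hw'
    by_contra hne
    have h2 : ({u, w} : Finset (Fin r × Fin n)) ⊆ S ∩ S' := by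
      intro x hx
      rw [mem_insert, mem_singleton] at hx
      rcases hx with rfl | rfl
      · exact mem_inter.mpr ⟨hu, hu'⟩
      · exact mem_inter.mpr ⟨hw, hw'⟩
    have h3 := card_le_card h2
    rw [card_insert_of_notMem (by rwa [mem_singleton]), card_singleton] at h3
    have h4 := hDdisj S hS S' hS' hne
    omega
  have hadjrc : ∀ c : Fin n × Fin n, c ∉ Dom → G.Adj (v0, c.1) (v1, c.2) := by
    intro c hc
    rw [hG, GAux_adj]
    constructor
    · intro h
      have := congrArg Fin.val h
      rw [hv0val, hv1val] at this
      omega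
    · rintro ⟨p, ⟨hpD, hp0⟩, ⟨-, hp1⟩⟩
      rw [Q_row hr W hv0val] at hp0
      rw [Q_col hr W hv1val] at hp1
      have : p = c := Prod.ext hp0 hp1
      rw [this] at hpD
      exact hc hpD
  have hcov : ∀ (c : Fin n × Fin n), c ∉ Dom → ∃ S, S ∈ D ∧ (v0, c.1) ∈ S ∧ (v1, c.2) ∈ S := by
    intro c hc
    obtain ⟨S, hS, h1, h2⟩ := hDcover _ _ (hadjrc c hc)
    exact ⟨S, hS, h1, h2⟩
  choose Sc hScD hSc0 hSc1 using hcov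
  choose vert hvmem hvfst using hvert
  have hget : ∀ (m : Fin (r - 2)) (i j : Fin n), (i, j) ∈ Dom → (W m i j).isSome := by
    intro m i j h
    exact Option.ne_none_iff_isSome.mp ((hdom m (i, j)).mpr h)
  set L : Fin (r - 2) → Fin n → Fin n → Fin n := fun m i j =>
    if h : (i, j) ∈ Dom then (W m i j).get (hget m i j h)
    else (vert (Sc (i, j) h) (hScD (i, j) h) (iotAux m)).2 with hL
  have hLfill : ∀ (m : Fin (r - 2)) (i j : Fin n), (i, j) ∈ Dom →
      W m i j = some (L m i j) := by
    intro m i j h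
    rw [hL]
    dsimp only
    rw [dif_pos h]
    exact (Option.some_get _).symm
  have hLopen : ∀ (m : Fin (r - 2)) (i j : Fin n) (h : (i, j) ∉ Dom),
      (iotAux m, L m i j) ∈ Sc (i, j) h := by
    intro m i j h
    have h1 : L m i j = (vert (Sc (i, j) h) (hScD (i, j) h) (iotAux m)).2 := by
      rw [hL]
      dsimp only
      rw [dif_neg h]
    rw [h1]
    have h2 : ((iotAux m : Fin r), (vert (Sc (i, j) h) (hScD (i, j) h) (iotAux m)).2)
        = vert (Sc (i, j) h) (hScD (i, j) h) (iotAux m) :=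
      Prod.ext (hvfst _ _ _).symm rfl
    rw [h2]
    exact hvmem _ _ _
  have hrowfree : ∀ (m : Fin (r - 2)) (i j : Fin n) (h : (i, j) ∉ Dom)
      (p : Fin n × Fin n), p ∈ Dom → p.1 = i → W m p.1 p.2 ≠ some (L m i j) := by
    intro m i j h p hpD hp1 hW
    have hne : ((v0 : Fin r), i) ≠ ((iotAux m : Fin r), L m i j) := by
      intro hh
      have := congrArg (fun x : Fin r × Fin n => x.1.val) hh
      simp only [iot_val] at this
      rw [hv0val] at this
      omega
    have hadj := hDclique _ (hScD (i, j) h) _ (hSc0 (i, j) h) _ (hLopen m i j h) hne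
    rw [hG, GAux_adj] at hadj
    exact hadj.2 ⟨p, ⟨hpD, (Q_row hr W hv0val i p).mpr hp1⟩,
      ⟨hpD, (Q_iot hr W m (L m i j) p).mpr hW⟩⟩
  have hcolfree : ∀ (m : Fin (r - 2)) (i j : Fin n) (h : (i, j) ∉ Dom)
      (p : Fin n × Fin n), p ∈ Dom → p.2 = j → W m p.1 p.2 ≠ some (L m i j) := by
    intro m i j h p hpD hp2 hW
    have hne : ((v1 : Fin r), j) ≠ ((iotAux m : Fin r), L m i j) := by
      intro hh
      have := congrArg (fun x : Fin r × Fin n => x.1.val) hh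
      simp only [iot_val] at this
      rw [hv1val] at this
      omega
    have hadj := hDclique _ (hScD (i, j) h) _ (hSc1 (i, j) h) _ (hLopen m i j h) hne
    rw [hG, GAux_adj] at hadj
    exact hadj.2 ⟨p, ⟨hpD, (Q_col hr W hv1val j p).mpr hp2⟩,
      ⟨hpD, (Q_iot hr W m (L m i j) p).mpr hW⟩⟩
  have hpairfree : ∀ (m m' : Fin (r - 2)) (i j : Fin n) (h : (i, j) ∉ Dom), m ≠ m' →
      ∀ p : Fin n × Fin n, p ∈ Dom → W m p.1 p.2 = some (L m i j) →
      W m' p.1 p.2 ≠ some (L m' i j) := by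
    intro m m' i j h hmm' p hpD hWm hWm'
    have hne : ((iotAux m : Fin r), L m i j) ≠ ((iotAux m' : Fin r), L m' i j) := by
      intro hh
      have := congrArg (fun x : Fin r × Fin n => x.1.val) hh
      simp only [iot_val] at this
      exact hmm' (Fin.ext (by omega))
    have hadj := hDclique _ (hScD (i, j) h) _ (hLopen m i j h) _ (hLopen m' i j h) hne
    rw [hG, GAux_adj] at hadj
    exact hadj.2 ⟨p, ⟨hpD, (Q_iot hr W m (L m i j) p).mpr hWm⟩,
      ⟨hpD, (Q_iot hr W m' (L m' i j) p).mpr hWm'⟩⟩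
  have hne0ι : ∀ (m : Fin (r - 2)) (x y : Fin n), ((v0 : Fin r), x) ≠ (iotAux m, y) := by
    intro m x y hh
    have := congrArg (fun z : Fin r × Fin n => z.1.val) hh
    simp only [iot_val] at this
    rw [hv0val] at this
    omega
  have hne1ι : ∀ (m : Fin (r - 2)) (x y : Fin n), ((v1 : Fin r), x) ≠ (iotAux m, y) := by
    intro m x y hh
    have := congrArg (fun z : Fin r × Fin n => z.1.val) hh
    simp only [iot_val] at this
    rw [hv1val] at this
    omega
  refine ⟨L, ?_, ?_, ?_, ?_⟩
  · -- Latin in rows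
    intro m i j j' hLL
    by_cases h1 : (i, j) ∈ Dom <;> by_cases h2 : (i, j') ∈ Dom
    · have a := hLfill m i j h1
      have b := hLfill m i j' h2
      rw [← hLL] at b
      exact lat1 m i j j' _ a b
    · exfalso
      have a := hLfill m i j h1
      rw [hLL] at a
      exact hrowfree m i j' h2 (i, j) h1 rfl a
    · exfalso
      have b := hLfill m i j' h2
      rw [← hLL] at b
      exact hrowfree m i j h1 (i, j') h2 rfl b
    · have hu1 := hLopen m i j h1
      have hu2 := hLopen m i j' h2
      rw [← hLL] at hu2
      have hSS := hglue _ (hScD (i, j) h1) _ (hScD (i, j') h2) _ _ (hne0ι m i (L m i j))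
        (hSc0 (i, j) h1) hu1 (hSc0 (i, j') h2) hu2
      have hc2 := hSc1 (i, j') h2
      rw [← hSS] at hc2
      have := huniq _ (hScD (i, j) h1) _ _ (hSc1 (i, j) h1) hc2 rfl
      exact congrArg Prod.snd this
  · -- Latin in columns
    intro m i i' j hLL
    by_cases h1 : (i, j) ∈ Dom <;> by_cases h2 : (i', j) ∈ Dom
    · have a := hLfill m i j h1
      have b := hLfill m i' j h2
      rw [← hLL] at b
      exact lat2 m i i' j _ a b
    · exfalso
      have a := hLfill m i j h1
      rw [hLL] at a
      exact hcolfree m i' j h2 (i, j) h1 rfl a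
    · exfalso
      have b := hLfill m i' j h2
      rw [← hLL] at b
      exact hcolfree m i j h1 (i', j) h2 rfl b
    · have hu1 := hLopen m i j h1
      have hu2 := hLopen m i' j h2
      rw [← hLL] at hu2
      have hSS := hglue _ (hScD (i, j) h1) _ (hScD (i', j) h2) _ _ (hne1ι m j (L m i j))
        (hSc1 (i, j) h1) hu1 (hSc1 (i', j) h2) hu2
      have hc2 := hSc0 (i', j) h2
      rw [← hSS] at hc2
      have := huniq _ (hScD (i, j) h1) _ _ (hSc0 (i, j) h1) hc2 rfl
      exact congrArg Prod.snd this
  · -- orthogonality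
    intro m m' i j i' j' hmm' hLL hLL'
    by_cases h1 : (i, j) ∈ Dom <;> by_cases h2 : (i', j') ∈ Dom
    · have a1 := hLfill m i j h1
      have a2 := hLfill m' i j h1
      have b1 := hLfill m i' j' h2
      have b2 := hLfill m' i' j' h2
      rw [← hLL] at b1
      rw [← hLL'] at b2
      have := ortho m m' (i, j) (i', j') _ _ hmm' a1 a2 b1 b2
      exact ⟨congrArg Prod.fst this, congrArg Prod.snd this⟩
    · exfalso
      have a1 := hLfill m i j h1
      have a2 := hLfill m' i j h1
      rw [hLL] at a1
      rw [hLL'] at a2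
      exact hpairfree m m' i' j' h2 hmm' (i, j) h1 a1 a2
    · exfalso
      have b1 := hLfill m i' j' h2
      have b2 := hLfill m' i' j' h2
      rw [← hLL] at b1
      rw [← hLL'] at b2
      exact hpairfree m m' i j h1 hmm' (i', j') h2 b1 b2
    · have hu1 := hLopen m i j h1
      have hu2 := hLopen m i' j' h2
      rw [← hLL] at hu2
      have hv1' := hLopen m' i j h1
      have hv2' := hLopen m' i' j' h2
      rw [← hLL'] at hv2'
      have hneuv : ((iotAux m : Fin r), L m i j) ≠ (iotAux m', L m' i j) := by
        intro hh
        have := congrArg (fun z : Fin r × Fin n => z.1.val) hh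
        simp only [iot_val] at this
        exact hmm' (Fin.ext (by omega))
      have hSS := hglue _ (hScD (i, j) h1) _ (hScD (i', j') h2) _ _ hneuv
        hu1 hv1' hu2 hv2'
      constructor
      · have hc2 := hSc0 (i', j') h2
        rw [← hSS] at hc2
        have := huniq _ (hScD (i, j) h1) _ _ (hSc0 (i, j) h1) hc2 rfl
        exact congrArg Prod.snd this
      · have hc2 := hSc1 (i', j') h2
        rw [← hSS] at hc2
        have := huniq _ (hScD (i, j) h1) _ _ (hSc1 (i, j) h1) hc2 rfl
        exact congrArg Prod.snd this
  · -- extension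
    intro m i j k hW
    have hD : (i, j) ∈ Dom := (hdom m (i, j)).mp
      (by rw [hW]; exact fun h => by cases h)
    have hfill := hLfill m i j hD
    rw [hW] at hfill
    injection hfill with h
    exact h.symm

set_option maxHeartbeats 1600000

/-- Suppose `1/n ≪ η ≪ ε, 1/r`, `r ≥ 3` and the `K_r`-decomposition theorem for balanced
`r`-partite `K_r`-divisible graphs of minimum partite degree `(1 - c'_r + ε')n` holds (with
`c'_3 = 1/25`, `c'_r = 1/(10⁶r³)`).  Let `c_3 = 1/25` and `c_r = 9/(10⁷r³)` for `r ≥ 4`.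
Then any sequence `T 1, ..., T (r-2)` of mutually orthogonal partial `n × n` Latin squares
in which every row, every column, and every coloured symbol is used at most `(c_r - ε)n`
times can be completed to a sequence of mutually orthogonal Latin squares. -/
theorem stmt18 (r : ℕ) (hr : 3 ≤ r) (ε : ℝ) (hε : 0 < ε)
    (cr cr' : ℝ)
    (hcr : cr = if r = 3 then 1/25 else 9/(10^7 * (r : ℝ)^3))
    (hcr' : cr' = if r = 3 then 1/25 else 1/(10^6 * (r : ℝ)^3))
    (hdecomp : ∀ ε' : ℝ, 0 < ε' → ∃ n₁ : ℕ, ∀ n : ℕ, n₁ ≤ n →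
      ∀ (β : Type) [Fintype β] [DecidableEq β],
      ∀ (V : Fin r → Finset β) (G : SimpleGraph β),
        (∀ j₁ j₂ : Fin r, j₁ ≠ j₂ → Disjoint (V j₁) (V j₂)) →
        (∀ x : β, ∃ j, x ∈ V j) →
        (∀ j, (V j).card = n) →
        (∀ x y : β, G.Adj x y → ∃ j₁ j₂ : Fin r, j₁ ≠ j₂ ∧ x ∈ V j₁ ∧ y ∈ V j₂) →
        (∀ j₁ j₂ : Fin r, ∀ v : β, v ∉ V j₁ → v ∉ V j₂ →
          ((V j₁ : Set β) ∩ G.neighborSet v).ncard =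
            ((V j₂ : Set β) ∩ G.neighborSet v).ncard) →
        (∀ (j : Fin r) (v : β), v ∉ V j →
          (1 - cr' + ε') * n ≤ (((V j : Set β) ∩ G.neighborSet v).ncard : ℝ)) →
        HasKrDecomp r G) :
    ∃ n₀ : ℕ, ∀ n : ℕ, n₀ ≤ n →
    ∀ T : Fin (r - 2) → Fin n → Fin n → Option (Fin n),
      (∀ m i j j' k, T m i j = some k → T m i j' = some k → j = j') →
      (∀ m i i' j k, T m i j = some k → T m i' j = some k → i = i') →
      (∀ m m' i j i' j' k k', m ≠ m' →
        T m i j = some k → T m' i j = some k' →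
        T m i' j' = some k → T m' i' j' = some k' → i = i' ∧ j = j') →
      (∀ i : Fin n,
        ((Finset.univ.filter fun j : Fin n => ∃ m, T m i j ≠ none).card : ℝ) ≤ (cr - ε) * n) →
      (∀ j : Fin n,
        ((Finset.univ.filter fun i : Fin n => ∃ m, T m i j ≠ none).card : ℝ) ≤ (cr - ε) * n) →
      (∀ (m : Fin (r - 2)) (k : Fin n),
        ((Finset.univ.filter fun p : Fin n × Fin n => T m p.1 p.2 = some k).card : ℝ) ≤
          (cr - ε) * n) →
      ∃ L : Fin (r - 2) → Fin n → Fin n → Fin n,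
        (∀ m i j j', L m i j = L m i j' → j = j') ∧
        (∀ m i i' j, L m i j = L m i' j → i = i') ∧
        (∀ m m' i j i' j', m ≠ m' → L m i j = L m i' j' → L m' i j = L m' i' j' →
          i = i' ∧ j = j') ∧
        (∀ m i j k, T m i j = some k → L m i j = k) := by
  classical
  have hrR : (3:ℝ) ≤ (r:ℝ) := by exact_mod_cast hr
  have hrpos : (0:ℝ) < (r:ℝ) := by linarith
  have hcrpos : 0 < cr := by
    rw [hcr]; split_ifs with h
    · norm_num
    · positivity
  set ε₀ : ℝ := min ε (cr/2) with hε₀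
  have hε₀pos : 0 < ε₀ := lt_min hε (by positivity)
  have hε₀le : ε₀ ≤ ε := min_le_left _ _
  have hε₀cr : ε₀ ≤ cr/2 := min_le_right _ _
  have hcrε₀ : 0 < cr - ε₀ := by linarith
  set γ : ℝ := 19/(2 * 10^7 * (r:ℝ)^3) with hγ
  have hγpos : 0 < γ := by rw [hγ]; positivity
  set ε' : ℝ := if r = 3 then ε₀ else cr' - γ with hε'
  have hcrval : r ≠ 3 → cr = 9/(10^7 * (r:ℝ)^3) := fun h => by rw [hcr, if_neg h]
  have hcr'val : r ≠ 3 → cr' = 1/(10^6 * (r:ℝ)^3) := fun h => by rw [hcr', if_neg h]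
  have hγcr' : r ≠ 3 → cr' - γ = 1/(2 * 10^7 * (r:ℝ)^3) := by
    intro h
    rw [hcr'val h, hγ]
    field_simp
    ring
  have hε'pos : 0 < ε' := by
    rw [hε']; split_ifs with h
    · exact hε₀pos
    · rw [hγcr' h]; positivity
  obtain ⟨n₁, hn₁⟩ := hdecomp ε' hε'pos
  refine ⟨max n₁ (10^9 * r^3), ?_⟩
  intro n hn T Tlat1 Tlat2 Tortho hrows hcols hsyms
  have hn1 : n₁ ≤ n := le_trans (le_max_left _ _) hn
  have hnbig : 10^9 * r^3 ≤ n := le_trans (le_max_right _ _) hn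
  have hnR : (10:ℝ)^9 * (r:ℝ)^3 ≤ (n:ℝ) := by exact_mod_cast hnbig
  have hnpos : (0:ℝ) < (n:ℝ) := by nlinarith [pow_pos hrpos 3]
  set Dom : Finset (Fin n × Fin n) :=
    univ.filter (fun p : Fin n × Fin n => ∃ m, T m p.1 p.2 ≠ none) with hDom
  set B : ℕ := ⌊(cr - ε₀) * n⌋₊ with hB
  set cap : ℕ := if r = 3 then B else ⌊γ * n⌋₊ with hcap
  have hBle : (B:ℝ) ≤ (cr - ε₀) * n := Nat.floor_le (by positivity)
  have hrowB : ∀ i : Fin n, (univ.filter fun j : Fin n => (i, j) ∈ Dom).card ≤ B := by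
    intro i
    apply Nat.le_floor
    calc ((univ.filter fun j : Fin n => (i, j) ∈ Dom).card : ℝ)
        = ((univ.filter fun j : Fin n => ∃ m, T m i j ≠ none).card : ℝ) := by
          congr 2
          apply filter_congr
          intro j _
          rw [hDom]
          simp
      _ ≤ (cr - ε) * n := hrows i
      _ ≤ (cr - ε₀) * n := by
          apply mul_le_mul_of_nonneg_right (by linarith) (le_of_lt hnpos)
  have hcolB : ∀ j : Fin n, (univ.filter fun i : Fin n => (i, j) ∈ Dom).card ≤ B := by
    intro j
    apply Nat.le_floor
    calc ((univ.filter fun i : Fin n => (i, j) ∈ Dom).card : ℝ)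
        = ((univ.filter fun i : Fin n => ∃ m, T m i j ≠ none).card : ℝ) := by
          congr 2
          apply filter_congr
          intro i _
          rw [hDom]
          simp
      _ ≤ (cr - ε) * n := hcols j
      _ ≤ (cr - ε₀) * n := by
          apply mul_le_mul_of_nonneg_right (by linarith) (le_of_lt hnpos)
  have husesB : ∀ (m : Fin (r - 2)) (k : Fin n),
      (univ.filter fun p : Fin n × Fin n => T m p.1 p.2 = some k).card ≤ B := by
    intro m k
    apply Nat.le_floor
    calc ((univ.filter fun p : Fin n × Fin n => T m p.1 p.2 = some k).card : ℝ)
        ≤ (cr - ε) * n := hsyms m k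
      _ ≤ (cr - ε₀) * n := by
          apply mul_le_mul_of_nonneg_right (by linarith) (le_of_lt hnpos)
  have hcrγ : r ≠ 3 → cr ≤ γ := by
    intro h
    rw [hcrval h, hγ]
    rw [div_le_div_iff₀ (by positivity) (by positivity)]
    nlinarith [pow_nonneg (le_of_lt hrpos) 3]
  have hBcap : B ≤ cap := by
    rw [hcap]
    split_ifs with h
    · exact le_refl _
    · apply Nat.floor_le_floor
      calc (cr - ε₀) * n ≤ cr * n := by nlinarith
        _ ≤ γ * n := by nlinarith [hcrγ h]
  have hfeas : 4 ≤ r → ∀ K : ℕ, K * cap ≤ n * B →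
      2 * B + (r - 3) * cap + K + 1 ≤ n := by
    intro hr4 K hK
    have h3 : r ≠ 3 := by omega
    have hcapeq : cap = ⌊γ * n⌋₊ := by rw [hcap, if_neg h3]
    have hR4 : (4:ℝ) ≤ (r:ℝ) := by exact_mod_cast hr4
    have hR3cube : (64:ℝ) ≤ (r:ℝ)^3 := by
      calc (64:ℝ) = 4^3 := by norm_num
        _ ≤ (r:ℝ)^3 := pow_le_pow_left₀ (by norm_num) hR4 3
    have hR2sq : (16:ℝ) ≤ (r:ℝ)^2 := by
      calc (16:ℝ) = 4^2 := by norm_num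
        _ ≤ (r:ℝ)^2 := pow_le_pow_left₀ (by norm_num) hR4 2
    have hX : (0:ℝ) < 10^7 * (r:ℝ)^3 := by positivity
    have hxX : 100 * (10^7 * (r:ℝ)^3) ≤ (n:ℝ) := by nlinarith [hnR]
    have hγn : (950:ℝ) ≤ γ * n := by
      rw [hγ, div_mul_eq_mul_div, le_div_iff₀ (by positivity)]
      linarith [hnR]
    have hcaple : (cap:ℝ) ≤ γ * n := by
      rw [hcapeq]; exact Nat.floor_le (by positivity)
    have hcapge : γ * n - 1 ≤ (cap:ℝ) := by
      rw [hcapeq]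
      have := Nat.sub_one_lt_floor (γ * (n:ℝ))
      linarith
    have hBcr : (B:ℝ) ≤ cr * n := by nlinarith [hBle, hε₀pos, hnpos]
    have hKR : (K:ℝ) * (cap:ℝ) ≤ (n:ℝ) * (B:ℝ) := by exact_mod_cast hK
    have hkey : cr * n * n ≤ 24/25 * (n:ℝ) * (γ * n - 1) := by
      rw [hcrval h3, hγ, ← sub_nonneg]
      have hid : 24/25 * (n:ℝ) * (19/(2*10^7*(r:ℝ)^3) * n - 1)
          - 9/(10^7*(r:ℝ)^3) * n * n
          = 3 * (n:ℝ) * ((n:ℝ) - 8 * (10^7 * (r:ℝ)^3)) / (25 * (10^7*(r:ℝ)^3)) := by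
        field_simp
        ring
      rw [hid]
      apply div_nonneg ?_ (by positivity)
      have h8 : (0:ℝ) ≤ (n:ℝ) - 8 * (10^7 * (r:ℝ)^3) := by nlinarith
      nlinarith
    have hKb : (K:ℝ) * (γ * n - 1) ≤ cr * n * n := by
      calc (K:ℝ) * (γ * n - 1) ≤ (K:ℝ) * (cap:ℝ) :=
            mul_le_mul_of_nonneg_left hcapge (Nat.cast_nonneg K)
        _ ≤ (n:ℝ) * (B:ℝ) := hKR
        _ ≤ (n:ℝ) * (cr * n) := mul_le_mul_of_nonneg_left hBcr (le_of_lt hnpos)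
        _ = cr * n * n := by ring
    have hKle : (K:ℝ) ≤ 24/25 * n := by
      have hpos : (0:ℝ) < γ * n - 1 := by linarith
      exact le_of_mul_le_mul_right (le_trans hKb hkey) hpos
    have h2B : 2 * (B:ℝ) ≤ 18 / (10^7*(r:ℝ)^3) * n := by
      rw [hcrval h3] at hBcr
      calc 2 * (B:ℝ) ≤ 2 * (9/(10^7*(r:ℝ)^3) * n) := by linarith
        _ = 18/(10^7*(r:ℝ)^3) * n := by ring
    have hγn0 : (0:ℝ) ≤ γ * n := by positivity
    have hcap0 : (0:ℝ) ≤ (cap:ℝ) := Nat.cast_nonneg _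
    have hRcap : ((r:ℝ) - 3) * (cap:ℝ) ≤ (r:ℝ) * (γ * n) := by
      nlinarith [hcaple, hR4, hcap0, hγn0]
    have hsmall1 : 18/(10^7*(r:ℝ)^3) * n ≤ 1/100 * n := by
      apply mul_le_mul_of_nonneg_right ?_ (le_of_lt hnpos)
      rw [div_le_div_iff₀ (by positivity) (by norm_num)]
      nlinarith
    have hsmall2 : (r:ℝ) * (γ * n) ≤ 1/100 * n := by
      rw [hγ]
      have hid2 : (r:ℝ) * (19/(2*10^7*(r:ℝ)^3) * n) = 19/(2*10^7*(r:ℝ)^2) * n := by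
        field_simp
      rw [hid2]
      apply mul_le_mul_of_nonneg_right ?_ (le_of_lt hnpos)
      rw [div_le_div_iff₀ (by positivity) (by norm_num)]
      nlinarith
    have hone : (1:ℝ) ≤ 1/100 * n := by nlinarith [hxX, hX]
    have hfin : 2*(B:ℝ) + ((r:ℝ) - 3) * (cap:ℝ) + (K:ℝ) + 1 ≤ (n:ℝ) := by linarith
    have hcast : ((2 * B + (r - 3) * cap + K + 1 : ℕ) : ℝ) ≤ (n:ℝ) := by
      push_cast [Nat.cast_sub (show 3 ≤ r by omega)]
      linarith [hfin]
    exact_mod_cast hcast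
  -- initial invariants
  have I1 : ∀ (m : Fin (r - 2)) (p : Fin n × Fin n), T m p.1 p.2 ≠ none → p ∈ Dom := by
    intro m p h
    rw [hDom]
    simp only [mem_filter, mem_univ, true_and]
    exact ⟨m, h⟩
  have I4 : ∀ (m m' : Fin (r - 2)) (p q : Fin n × Fin n) k k', m ≠ m' →
      T m p.1 p.2 = some k → T m' p.1 p.2 = some k' → T m q.1 q.2 = some k →
      T m' q.1 q.2 = some k' → p = q := by
    intro m m' p q k k' hne h1 h2 h3 h4
    have := Tortho m m' p.1 p.2 q.1 q.2 k k' hne h1 h2 h3 h4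
    exact Prod.ext this.1 this.2
  have I6 : r = 3 → ∀ (m : Fin (r - 2)) (p : Fin n × Fin n), p ∈ Dom →
      T m p.1 p.2 ≠ none := by
    intro h3 m p hp
    rw [hDom] at hp
    simp only [mem_filter, mem_univ, true_and] at hp
    obtain ⟨m', hm'⟩ := hp
    have hmm : m' = m := by
      apply Fin.ext
      have ha := m.isLt
      have hb := m'.isLt
      omega
    rwa [hmm] at hm'
  have husescap : ∀ (m : Fin (r - 2)) (k : Fin n),
      (univ.filter fun p : Fin n × Fin n => T m p.1 p.2 = some k).card ≤ cap :=
    fun m k => le_trans (husesB m k) hBcap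
  obtain ⟨W, hWext, hWdom, hW2, hW3, hW4, hW5⟩ :=
    fillAux hr cap B Dom hrowB hcolB hfeas
      ((univ.filter fun q : Fin (r - 2) × Fin n × Fin n =>
        q.2 ∈ Dom ∧ T q.1 q.2.1 q.2.2 = none).card)
      T I1 Tlat1 Tlat2 I4 husescap I6 (le_refl _)
  -- bounds needed for step2
  have hcapn : cap ≤ n := by
    have hcapfloor : (cap:ℝ) ≤ (n:ℝ) := by
      rw [hcap]
      split_ifs with h
      · calc (B:ℝ) ≤ (cr - ε₀) * n := hBle
          _ ≤ 1 * n := by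
            apply mul_le_mul_of_nonneg_right ?_ (le_of_lt hnpos)
            rw [hcr, if_pos h]
            linarith [hε₀pos]
          _ = (n:ℝ) := by ring
      · calc ((⌊γ * n⌋₊ : ℕ):ℝ) ≤ γ * n := Nat.floor_le (by positivity)
          _ ≤ 1 * n := by
            apply mul_le_mul_of_nonneg_right ?_ (le_of_lt hnpos)
            rw [hγ]
            rw [div_le_one (by positivity)]
            nlinarith [pow_le_pow_left₀ (by norm_num : (0:ℝ) ≤ 3) hrR 3]
          _ = (n:ℝ) := by ring
    exact_mod_cast hcapfloor
  have hδcap : (1 - cr' + ε') * n ≤ ((n - cap : ℕ) : ℝ) := by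
    have hcast : ((n - cap : ℕ) : ℝ) = (n:ℝ) - (cap:ℝ) := by
      rw [Nat.cast_sub hcapn]
    rw [hcast]
    have hcapcr' : (cap:ℝ) ≤ (cr' - ε') * n := by
      rw [hcap]
      split_ifs with h
      · have he : cr' = cr := by rw [hcr', hcr, if_pos h, if_pos h]
        have he2 : ε' = ε₀ := by rw [hε', if_pos h]
        rw [he, he2]
        exact hBle
      · have he2 : cr' - ε' = γ := by rw [hε', if_neg h]; ring
        rw [he2]
        exact Nat.floor_le (by positivity)
    nlinarith
  obtain ⟨L, hL1, hL2, hL3, hL4⟩ :=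
    step2 hr cap ((1 - cr' + ε') * n) Dom W hWdom hW2 hW3 hW4
      (fun i => le_trans (hrowB i) hBcap)
      (fun j => le_trans (hcolB j) hBcap)
      hW5 hδcap
      (fun V G a b c d e f => hn₁ n hn1 (Fin r × Fin n) V G a b c d e f)
  exact ⟨L, hL1, hL2, hL3, fun m i j k h => hL4 m i j k (hWext m i j k h)⟩
end
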